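/- arXiv:2009.00760 — 4 statements merged into one kernel-verified Lean document; each statement's English description precedes it below -/
import Mathlib

section
/- For every integer m ≥ 1, every integer n ≥ 1, and every permutation σ of {1, ..., m}, the m-tuple of statistics (e_1, e_2, ..., e_m) on the set T^m_n of m-ary trees with n nodes is jointly equidistributed with its σ-permutation; that is, for every tuple (r_1, ..., r_m) of nonnegative integers, the number of trees T ∈ T^m_n with (e_1, ..., e_m)(T) = (r_1, ..., r_m) equals the number of trees T ∈ T^m_n with (e_1, ..., e_m)(T) = (r_{σ(1)}, ..., r_{σ(m)}). -/
/-- An `m`-ary tree: `leaf` denotes an absent subtree, and `node f` is a node whose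
(possibly absent) child in position `i` is `f i`.  The nodes of the tree are the
`node` constructors. -/
inductive MTree (m : ℕ) : Type
  | leaf : MTree m
  | node : (Fin m → MTree m) → MTree m

/-- The number of nodes of an `m`-ary tree. -/
def MTree.size {m : ℕ} : MTree m → ℕ
  | .leaf => 0
  | .node f => 1 + ∑ i, (f i).size

/-- `1` if the tree is present (a node), `0` if it is absent (a leaf). -/
def MTree.isNode {m : ℕ} : MTree m → ℕ
  | .leaf => 0
  | .node _ => 1

/-- `childCount i T` is the statistic `e_{i+1}(T)`: the number of nodes of `T` that are
children in position `i` (`0`-indexed, so position `i+1` in `1`-indexed terms)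
of their parent. -/
def MTree.childCount {m : ℕ} (i : Fin m) : MTree m → ℕ
  | .leaf => 0
  | .node f => (f i).isNode + ∑ j, (f j).childCount i

/-- Relabel the child positions of every node by `σ`. -/
def MTree.perm {m : ℕ} (σ : Equiv.Perm (Fin m)) : MTree m → MTree m
  | .leaf => .leaf
  | .node f => .node (fun i => (f (σ i)).perm σ)

theorem MTree.size_perm {m : ℕ} (σ : Equiv.Perm (Fin m)) (T : MTree m) :
    (T.perm σ).size = T.size := by
  induction T with
  | leaf => rfl
  | node f ih =>
    simp only [MTree.perm, MTree.size, ih]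
    rw [Equiv.sum_comp σ (fun i => (f i).size)]

theorem MTree.isNode_perm {m : ℕ} (σ : Equiv.Perm (Fin m)) (T : MTree m) :
    (T.perm σ).isNode = T.isNode := by
  cases T <;> rfl

theorem MTree.childCount_perm {m : ℕ} (σ : Equiv.Perm (Fin m)) (i : Fin m) (T : MTree m) :
    MTree.childCount i (T.perm σ) = MTree.childCount (σ i) T := by
  induction T with
  | leaf => rfl
  | node f ih =>
    simp only [MTree.perm, MTree.childCount, MTree.isNode_perm, ih]
    rw [Equiv.sum_comp σ (fun j => (f j).childCount (σ i))]

theorem MTree.perm_perm {m : ℕ} (σ τ : Equiv.Perm (Fin m)) (T : MTree m) :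
    (T.perm σ).perm τ = T.perm (σ * τ) := by
  induction T with
  | leaf => rfl
  | node f ih =>
    simp only [MTree.perm, ih]
    rfl

theorem MTree.perm_one {m : ℕ} (T : MTree m) : T.perm 1 = T := by
  induction T with
  | leaf => rfl
  | node f ih => simp only [MTree.perm, ih]; rfl

/-- For `m ≥ 1`, `n ≥ 1` and any permutation `σ` of the `m` child
positions, the `m`-statistic `(e_1, …, e_m)` on `m`-ary trees with `n` nodes is jointly
equidistributed with its `σ`-permutation. -/
theorem child_statistics_jointly_equidistributed (m n : ℕ) (hm : 1 ≤ m) (hn : 1 ≤ n)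
    (σ : Equiv.Perm (Fin m)) (r : Fin m → ℕ) :
    Nat.card {T : MTree m // T.size = n ∧ ∀ i, MTree.childCount i T = r i} =
    Nat.card {T : MTree m // T.size = n ∧ ∀ i, MTree.childCount i T = r (σ i)} := by
  apply Nat.card_congr
  refine ⟨fun ⟨T, hs, hc⟩ => ⟨MTree.perm σ T, ?_, ?_⟩,
          fun ⟨T, hs, hc⟩ => ⟨MTree.perm σ⁻¹ T, ?_, ?_⟩, ?_, ?_⟩
  · rw [MTree.size_perm, hs]
  · intro i; rw [MTree.childCount_perm, hc]
  · rw [MTree.size_perm, hs]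
  · intro i; rw [MTree.childCount_perm, hc, ← Equiv.Perm.mul_apply, mul_inv_cancel, Equiv.Perm.one_apply]
  · rintro ⟨T, hs, hc⟩
    simp [MTree.perm_perm, MTree.perm_one]
  · rintro ⟨T, hs, hc⟩
    simp [MTree.perm_perm, MTree.perm_one]
end

section
/- For every integer k ≥ 1, every k-Dyck path Q whose maximal suffix of down-steps has length n ≥ 1 has a unique decomposition Q = Q_0^{(0)} u Q_1^{(1)} u ⋯ Q_{kn-1}^{(kn-1)} u d^n, where each Q_j (0 ≤ j ≤ kn-1) is a k-Dyck path and Q_j^{(j)} denotes its j-lifting. -/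
/-- A step of a `k`-Dyck path: `true` is an up-step `u = (1,1)`,
`false` is a down-step `d = (1,-k)`. -/
abbrev DStep := Bool

/-- The height change produced by a step of a `k`-Dyck path. -/
def stepVal (k : ℕ) (s : DStep) : ℤ := if s then 1 else -(k : ℤ)

/-- The height of the path `P` (with steps `u = +1`, `d = -k`) after its first `j` steps,
starting at height `start`. -/
def height (k : ℕ) (start : ℤ) (P : List DStep) (j : ℕ) : ℤ :=
  start + ((P.take j).map (stepVal k)).sum

/-- `P` is a `k`-Dyck path: it starts and ends at height `0` and never goes below `0`.
Its down-size is `P.count false`, the number of its down-steps. -/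
def IsDyck (k : ℕ) (P : List DStep) : Prop :=
  (∀ j ≤ P.length, 0 ≤ height k 0 P j) ∧ height k 0 P P.length = 0

/-- The set of positions of peaks (occurrences of the factor `ud`) of `P`:
`j` is a peak position if step `j` is `u` and step `j+1` is `d`. -/
def peakSet (P : List DStep) : Finset ℕ :=
  (Finset.range P.length).filter fun j => P.getD j false = true ∧ P.getD (j+1) true = false

/-- The number of all peaks of `P` (run starting at height `start`) whose height is
`≡ i (mod k)`; the height of a peak `ud` is the height at the vertex between `u` and `d`. -/
def pkAll (k : ℕ) (start : ℤ) (i : ℕ) (P : List DStep) : ℕ :=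
  ((peakSet P).filter fun j => height k start P (j+1) % (k : ℤ) = (i : ℤ)).card

/-- `pkMod k i P` is the statistic `pk_i(P)`: the number of non-rightmost peaks of `P`
(starting at height `0`) whose height is `≡ i (mod k)`. -/
def pkMod (k : ℕ) (i : ℕ) (P : List DStep) : ℕ :=
  ((peakSet P).filter fun j =>
    (∃ j' ∈ peakSet P, j < j') ∧ height k 0 P (j+1) % (k : ℤ) = (i : ℤ)).card

/-- The statistic `pk(P)`: the total number of non-rightmost peaks of `P`. -/
def pkNR (P : List DStep) : ℕ :=
  ((peakSet P).filter fun j => ∃ j' ∈ peakSet P, j < j').card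

/-- The statistic `dd(P)`: the number of double descents (occurrences of the factor `dd`). -/
def ddCount (P : List DStep) : ℕ :=
  ((Finset.range P.length).filter fun j =>
    P.getD j true = false ∧ P.getD (j+1) true = false).card

/-- The combined statistic `(pk_0, …, pk_{k-1}, dd)`:
for `i < k` it is `pk_i`, and for `i = k` it is `dd`. -/
def pathStat (k : ℕ) (P : List DStep) (i : Fin (k+1)) : ℕ :=
  if (i : ℕ) < k then pkMod k i P else ddCount P

/-- The length of the maximal suffix of down-steps of `P`. -/
def downSuffixLen (P : List DStep) : ℕ := (P.reverse.takeWhile (fun s => !s)).length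

/-- The permutation `π_n` of `{0, …, kn-1}` (as a function on `ℕ`), which in cycle
notation is `(k-1,…,1,0)(2k-1,…,k+1,k)⋯(kn-1,…,k(n-1)+1,k(n-1))`:
`j ↦ j + k - 1` if `j ≡ 0 (mod k)`, and `j ↦ j - 1` otherwise. -/
def cyclicPerm (k : ℕ) (j : ℕ) : ℕ := if j % k = 0 then j + (k - 1) else j - 1

/-- `assembled k n f` is the path `f 0 ++ u ++ f 1 ++ u ++ ⋯ ++ f (kn-1) ++ u ++ d^n`,
i.e. the path `Q = Q_0^{(0)} u Q_1^{(1)} u ⋯ Q_{kn-1}^{(kn-1)} u d^n` with blocks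
`Q_j = f j` (the `j`-lifting only changes the starting height, not the steps). -/
def assembled (k n : ℕ) (f : ℕ → List DStep) : List DStep :=
  (List.ofFn fun j : Fin (k * n) => f (j : ℕ) ++ [true]).flatten ++ List.replicate n false

namespace UD

/-- total height change -/
def S (k : ℕ) (P : List DStep) : ℤ := (P.map (stepVal k)).sum

lemma S_append (k : ℕ) (A B : List DStep) : S k (A ++ B) = S k A + S k B := by
  simp [S]

lemma height_eq (k : ℕ) (P : List DStep) (j : ℕ) :
    height k 0 P j = S k (P.take j) := by
  simp [height, S]

lemma isDyck_iff (k : ℕ) (P : List DStep) :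
    IsDyck k P ↔ (∀ j ≤ P.length, 0 ≤ S k (P.take j)) ∧ S k P = 0 := by
  unfold IsDyck
  simp only [height_eq, List.take_length]

/-- the assembled prefix -/
def FF (k m : ℕ) (f : Fin m → List DStep) : List DStep :=
  (List.ofFn fun j : Fin m => f j ++ [true]).flatten

lemma FF_zero (k : ℕ) (f : Fin 0 → List DStep) : FF k 0 f = [] := by
  simp [FF]

lemma FF_succ (k m : ℕ) (f : Fin (m+1) → List DStep) :
    FF k (m+1) f = FF k m (Fin.init f) ++ (f (Fin.last m) ++ [true]) := by
  unfold FF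
  rw [List.ofFn_succ']
  rw [List.concat_eq_append, List.flatten_concat]
  rfl

lemma FF_snoc (k m : ℕ) (g : Fin m → List DStep) (Q : List DStep) :
    FF k (m+1) (Fin.snoc g Q) = FF k m g ++ (Q ++ [true]) := by
  rw [FF_succ, Fin.init_snoc, Fin.snoc_last]

lemma S_FF (k : ℕ) : ∀ m (f : Fin m → List DStep), (∀ j, IsDyck k (f j)) →
    S k (FF k m f) = m := by
  intro m
  induction m with
  | zero => intro f _; simp [FF_zero, S]
  | succ m ih =>
    intro f hf
    rw [FF_succ, S_append, S_append, ih (Fin.init f) (fun j => hf _),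
      ((isDyck_iff k _).1 (hf (Fin.last m))).2]
    simp [S, stepVal]

lemma exist (k : ℕ) (hk : 1 ≤ k) : ∀ (m : ℕ) (P : List DStep),
    (∀ j ≤ P.length, 0 ≤ S k (P.take j)) → S k P = (m : ℤ) →
    (∀ x, P.getLast? = some x → x = true) →
    ∃ g : Fin m → List DStep, (∀ j, IsDyck k (g j)) ∧ P = FF k m g := by
  intro m
  induction m with
  | zero =>
    intro P hnn hend hlast
    have hP : P = [] := by
      by_contra hne
      have hl : P.getLast hne = true := hlast _ (List.getLast?_eq_getLast hne)
      have hPd : P.dropLast ++ [P.getLast hne] = P := List.dropLast_append_getLast hne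
      have h1 : S k P.dropLast = -1 := by
        have ht : S k [P.getLast hne] = 1 := by simp [S, stepVal, hl]
        rw [← hPd, S_append, ht] at hend
        push_cast at hend
        linarith
      have h2 := hnn (P.length - 1) (Nat.sub_le _ _)
      rw [← List.dropLast_eq_take, h1] at h2
      linarith
    exact ⟨fun j => j.elim0, fun j => j.elim0, by rw [hP, FF_zero]⟩
  | succ m ih =>
    intro P hnn hend hlast
    classical
    have hne : P ≠ [] := by
      rintro rfl
      simp [S] at hend
      omega
    have hl : P.getLast hne = true := hlast _ (List.getLast?_eq_getLast hne)
    set R := P.dropLast with hRdef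
    have hPR : R ++ [true] = P := by
      rw [hRdef, ← hl]; exact List.dropLast_append_getLast hne
    have hRlen : R.length + 1 = P.length := by
      rw [← hPR]; simp
    have hRtake : ∀ j ≤ R.length, R.take j = P.take j := by
      intro j hj
      conv_rhs => rw [← hPR]
      exact (List.take_append_of_le_length hj).symm
    have hRnn : ∀ j ≤ R.length, 0 ≤ S k (R.take j) := by
      intro j hj
      rw [hRtake j hj]
      exact hnn j (by omega)
    have hRS : S k R = (m : ℤ) := by
      have ht : S k [true] = 1 := by simp [S, stepVal]
      rw [← hPR, S_append, ht] at hend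
      push_cast at hend
      linarith
    set q : ℕ → Prop := fun i => ∀ j, i ≤ j → j ≤ R.length → (m : ℤ) ≤ S k (R.take j)
      with hqdef
    have hqlen : q R.length := by
      intro j hj hj'
      have : j = R.length := le_antisymm hj' hj
      rw [this, List.take_length, hRS]
    have hqex : ∃ i, q i := ⟨R.length, hqlen⟩
    set s := Nat.find hqex with hsdef
    have hs : q s := Nat.find_spec hqex
    have hsle : s ≤ R.length := Nat.find_le hqlen
    have hkey : S k (R.take s) = (m : ℤ) ∧
        ∀ x, (R.take s).getLast? = some x → x = true := by
      rcases Nat.eq_zero_or_pos s with h0 | hpos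
      · have hm0 : (m : ℤ) ≤ 0 := by simpa [S] using hs 0 (by omega) (by omega)
        have hm : (m : ℤ) = 0 := le_antisymm hm0 (by exact_mod_cast Nat.zero_le m)
        rw [h0]
        exact ⟨by simpa [S] using hm.symm, by intro x hx; simp at hx⟩
      · set i := s - 1 with hidef
        have hsi : s = i + 1 := by omega
        have hni : ∃ j, i ≤ j ∧ j ≤ R.length ∧ S k (R.take j) < (m : ℤ) := by
          have h := Nat.find_min hqex (m := i) (by omega)
          by_contra hcon
          push_neg at hcon
          exact h (fun j hj hj' => hcon j hj hj')
        obtain ⟨j, hij, hjlen, hjlt⟩ := hni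
        have hji : j = i := by
          by_contra hne'
          exact absurd (hs j (by omega) hjlen) (not_le.2 hjlt)
        rw [hji] at hjlt hjlen
        have hilen : i < R.length := by
          rcases lt_or_eq_of_le hjlen with h | h
          · exact h
          · rw [h, List.take_length, hRS] at hjlt; exact absurd hjlt (lt_irrefl _)
        have htk : R.take (i+1) = R.take i ++ [R[i]] := by
          rw [List.take_succ, List.getElem?_eq_getElem hilen]
          rfl
        have hs1 : (m : ℤ) ≤ S k (R.take (i+1)) := hs (i+1) (by omega) (by omega)
        have hSsucc : S k (R.take (i+1)) = S k (R.take i) + stepVal k R[i] := by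
          rw [htk, S_append]; simp [S]
        have hRi : R[i] = true := by
          cases hB : R[i] with
          | false =>
            exfalso
            rw [hB] at hSsucc
            simp only [stepVal, Bool.false_eq_true, if_false] at hSsucc
            have hk' : (1 : ℤ) ≤ (k : ℤ) := by exact_mod_cast hk
            linarith
          | true => rfl
        constructor
        · rw [hsi, hSsucc, hRi]
          simp only [stepVal, if_true]
          rw [hSsucc, hRi] at hs1
          simp only [stepVal, if_true] at hs1
          linarith
        · rw [hsi, htk, hRi]
          intro x hx
          rw [List.getLast?_concat] at hx
          exact (Option.some_inj.mp hx).symm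
    set QQ := R.drop s with hQQdef
    set P' := R.take s with hP'def
    have hQQlen : QQ.length = R.length - s := by simp [hQQdef]
    have hsplit : P' ++ QQ = R := List.take_append_drop s R
    have hQQtake : ∀ i, R.take (s + i) = P' ++ QQ.take i := fun i => List.take_add ..
    have hQQDyck : IsDyck k QQ := by
      rw [isDyck_iff]
      constructor
      · intro i hile
        have h1 : (m : ℤ) ≤ S k (R.take (s + i)) := hs (s + i) (by omega) (by omega)
        rw [hQQtake i, S_append, hkey.1] at h1
        linarith
      · have h2 := congrArg (S k) hsplit
        rw [S_append, hkey.1, hRS] at h2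
        linarith
    have hP'len : P'.length = s := by simp [hP'def, hsle]
    have hP'take : ∀ j ≤ s, P'.take j = R.take j := by
      intro j hj
      rw [hP'def, List.take_take]
      congr 1
      omega
    obtain ⟨g', hg'D, hg'E⟩ := ih P'
      (by
        intro j hj
        rw [hP'len] at hj
        rw [hP'take j hj]
        exact hRnn j (by omega))
      (by rw [hP'def]; exact hkey.1)
      (by rw [hP'def]; exact hkey.2)
    refine ⟨Fin.snoc g' QQ, ?_, ?_⟩
    · intro j
      refine Fin.lastCases ?_ ?_ j
      · rw [Fin.snoc_last]; exact hQQDyck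
      · intro i; rw [Fin.snoc_castSucc]; exact hg'D i
    · rw [FF_snoc, ← hg'E, ← List.append_assoc, hsplit, hPR]

lemma FF_pos (k m : ℕ) (f : Fin (m+1) → List DStep) (hf : ∀ j, IsDyck k (f j)) :
    ∃ A₀, FF k (m+1) f = A₀ ++ [true] ∧ S k A₀ = (m : ℤ) := by
  refine ⟨FF k m (Fin.init f) ++ f (Fin.last m), ?_, ?_⟩
  · rw [FF_succ, List.append_assoc]
  · rw [S_append, S_FF k m (Fin.init f) (fun j => hf _),
      ((isDyck_iff k _).1 (hf (Fin.last m))).2, add_zero]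

lemma cut_spec (k m : ℕ) (f : Fin (m+1) → List DStep) (hf : ∀ j, IsDyck k (f j))
    (A B : List DStep) (hA : A = FF k m (Fin.init f)) (hB : B = f (Fin.last m)) :
    (∀ j, A.length ≤ j → j ≤ (A ++ B).length → (m : ℤ) ≤ S k ((A ++ B).take j)) ∧
    ∀ i < A.length, ∃ j, i ≤ j ∧ j ≤ (A ++ B).length ∧ S k ((A ++ B).take j) < (m : ℤ) := by
  have hSA : S k A = (m : ℤ) := by rw [hA]; exact S_FF k m (Fin.init f) (fun j => hf _)
  have hBd := (isDyck_iff k B).1 (by rw [hB]; exact hf _)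
  constructor
  · intro j hj hj'
    have hlen : (A ++ B).length = A.length + B.length := by simp
    have hji : j = A.length + (j - A.length) := by omega
    have hiB : j - A.length ≤ B.length := by omega
    rw [hji, List.take_add, List.take_left, List.drop_left, S_append, hSA]
    have := hBd.1 _ hiB
    linarith
  · intro i hi
    cases m with
    | zero => exfalso; rw [hA, FF_zero] at hi; simp at hi
    | succ m'' =>
      obtain ⟨A₀, hA₀, hS₀⟩ := FF_pos k m'' (Fin.init f) (fun j => hf _)
      rw [← hA] at hA₀
      have hAlen : A.length = A₀.length + 1 := by rw [hA₀]; simp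
      refine ⟨A₀.length, by omega, by simp; omega, ?_⟩
      have htk : (A ++ B).take A₀.length = A₀ := by
        rw [hA₀, List.append_assoc, List.take_left]
      rw [htk, hS₀]
      push_cast
      linarith

lemma uniq (k : ℕ) : ∀ (m : ℕ) (f f' : Fin m → List DStep),
    (∀ j, IsDyck k (f j)) → (∀ j, IsDyck k (f' j)) → FF k m f = FF k m f' → f = f' := by
  intro m
  induction m with
  | zero => intro f f' _ _ _; funext j; exact j.elim0
  | succ m ih =>
    intro f f' hf hf' hFF
    have hA : FF k (m+1) f = (FF k m (Fin.init f) ++ f (Fin.last m)) ++ [true] := by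
      rw [FF_succ, List.append_assoc]
    have hA' : FF k (m+1) f' = (FF k m (Fin.init f') ++ f' (Fin.last m)) ++ [true] := by
      rw [FF_succ, List.append_assoc]
    have hR : FF k m (Fin.init f) ++ f (Fin.last m)
        = FF k m (Fin.init f') ++ f' (Fin.last m) := by
      apply List.append_cancel_right (bs := [true])
      rw [← hA, ← hA', hFF]
    obtain ⟨cA1, cA2⟩ := cut_spec k m f hf _ _ rfl rfl
    obtain ⟨cA1', cA2'⟩ := cut_spec k m f' hf' _ _ rfl rfl
    rw [← hR] at cA1' cA2'
    have hlen : (FF k m (Fin.init f)).length = (FF k m (Fin.init f')).length := by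
      by_contra hne
      rcases Nat.lt_or_ge (FF k m (Fin.init f)).length (FF k m (Fin.init f')).length
        with h | h
      · obtain ⟨j, hj1, hj2, hj3⟩ := cA2' _ h
        exact absurd (cA1 j hj1 hj2) (not_le.2 hj3)
      · have h' : (FF k m (Fin.init f')).length < (FF k m (Fin.init f)).length := by omega
        obtain ⟨j, hj1, hj2, hj3⟩ := cA2 _ h'
        exact absurd (cA1' j hj1 hj2) (not_le.2 hj3)
    have hAA' : FF k m (Fin.init f) = FF k m (Fin.init f') := by
      have h1 := congrArg (List.take (FF k m (Fin.init f)).length) hR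
      rwa [List.take_left, hlen, List.take_left] at h1
    have hBB' : f (Fin.last m) = f' (Fin.last m) := by
      have h1 := congrArg (List.drop (FF k m (Fin.init f)).length) hR
      rwa [List.drop_left, hlen, List.drop_left] at h1
    have hinit : Fin.init f = Fin.init f' := ih _ _ (fun j => hf _) (fun j => hf' _) hAA'
    rw [← Fin.snoc_init_self f, ← Fin.snoc_init_self f', hinit, hBB']

lemma twrep : ∀ (m : ℕ) (l : List Bool),
    List.takeWhile (fun s => !s) (List.replicate m false ++ l)
      = List.replicate m false ++ List.takeWhile (fun s => !s) l := by
  intro m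
  induction m with
  | zero => intro l; simp
  | succ m ih => intro l; simp [List.replicate_succ, List.takeWhile_cons, ih]

end UD

open UD in
theorem unique_decomposition' (k n : ℕ) (hk : 1 ≤ k) (hn : 1 ≤ n) (Q : List DStep)
    (hQ : IsDyck k Q) (hsuf : (Q.reverse.takeWhile (fun s => !s)).length = n) :
    ∃! f : Fin (k * n) → List DStep,
      (∀ j, IsDyck k (f j)) ∧
      Q = (List.ofFn fun j : Fin (k * n) => f j ++ [true]).flatten ++
            List.replicate n false := by
  have hnn : ∀ j ≤ Q.length, 0 ≤ S k (Q.take j) := by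
    intro j hj
    rw [← height_eq]
    exact hQ.1 j hj
  have hend : S k Q = 0 := by
    have h := hQ.2
    rwa [height_eq, List.take_length] at h
  have htw : Q.reverse.takeWhile (fun s => !s) = List.replicate n false := by
    refine List.eq_replicate_iff.mpr ⟨hsuf, fun b hb => ?_⟩
    simpa using List.mem_takeWhile_imp hb
  obtain ⟨rest, hrest⟩ := List.takeWhile_prefix (l := Q.reverse) (fun s => !s)
  rw [htw] at hrest
  set P := rest.reverse with hPdef
  have hQP : Q = P ++ List.replicate n false := by
    have h1 := congrArg List.reverse hrest
    rw [List.reverse_append, List.reverse_replicate, List.reverse_reverse] at h1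
    exact h1.symm
  have hPlen : P.length + n = Q.length := by
    rw [hQP]; simp
  have hSrep : S k (List.replicate n false) = -((n : ℤ) * k) := by
    simp [S, stepVal, List.map_replicate, List.sum_replicate, nsmul_eq_mul]
  have hSP : S k P = ((k * n : ℕ) : ℤ) := by
    have h := hend
    rw [hQP, S_append, hSrep] at h
    push_cast
    linarith
  have hPnn : ∀ j ≤ P.length, 0 ≤ S k (P.take j) := by
    intro j hj
    have h : Q.take j = P.take j := by
      rw [hQP]; exact List.take_append_of_le_length hj
    rw [← h]
    exact hnn j (by omega)
  have hPlast : ∀ x, P.getLast? = some x → x = true := by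
    intro x hx
    have hPne : P ≠ [] := by rintro h; rw [h] at hx; simp at hx
    have hgl : P.getLast hPne = x := by
      rw [List.getLast?_eq_getLast hPne] at hx
      exact Option.some_inj.mp hx
    cases x with
    | true => rfl
    | false =>
      exfalso
      have hP2 : P.dropLast ++ [false] = P := by
        conv_lhs => rw [← hgl]
        exact List.dropLast_append_getLast hPne
      have hrev : rest = false :: P.dropLast.reverse := by
        have h1 : rest = P.reverse := by rw [hPdef, List.reverse_reverse]
        rw [h1, ← hP2]
        simp
      have h2 := hrest
      rw [hrev] at h2
      have h4 := htw
      rw [← h2, twrep] at h4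
      have h5 := congrArg List.length h4
      simp [List.takeWhile_cons] at h5
  obtain ⟨g, hgD, hgE⟩ := exist k hk (k * n) P hPnn hSP hPlast
  refine ⟨g, ⟨hgD, ?_⟩, ?_⟩
  · show Q = FF k (k * n) g ++ List.replicate n false
    rw [hQP, hgE]
  · rintro f ⟨hfD, hfE⟩
    apply uniq k (k * n) f g hfD hgD
    have h : FF k (k * n) f ++ List.replicate n false
        = FF k (k * n) g ++ List.replicate n false := by
      have h1 : Q = FF k (k * n) f ++ List.replicate n false := hfE
      rw [← h1, hQP, hgE]
    exact List.append_cancel_right h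


/-- Every `k`-Dyck path `Q` whose maximal suffix of down-steps has length
`n ≥ 1` decomposes uniquely as `Q = Q_0^{(0)} u Q_1^{(1)} u ⋯ Q_{kn-1}^{(kn-1)} u d^n`
with each `Q_j` a `k`-Dyck path (a `j`-lifting has the same steps, started at height `j`). -/
theorem unique_decomposition (k n : ℕ) (hk : 1 ≤ k) (hn : 1 ≤ n) (Q : List DStep)
    (hQ : IsDyck k Q) (hsuf : downSuffixLen Q = n) :
    ∃! f : Fin (k * n) → List DStep,
      (∀ j, IsDyck k (f j)) ∧
      Q = (List.ofFn fun j : Fin (k * n) => f j ++ [true]).flatten ++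
            List.replicate n false := by
  exact unique_decomposition' k n hk hn Q hQ hsuf
end

section
/- For every integer k ≥ 1 and n ≥ 0, the cyclic shift κ is a bijection from the set P^k_n of k-Dyck paths of down-size n to itself, and the k-fold composition κ^k is the identity map on P^k_n. -/
-- ===== auxiliary lemmas =====
def asmL (F : List (List DStep)) (m : ℕ) : List DStep :=
  (F.map (· ++ [true])).flatten ++ List.replicate m false

lemma assembled_eq_asmL (k m : ℕ) (f : ℕ → List DStep) :
    assembled k m f = asmL (List.ofFn fun j : Fin (k*m) => f (j : ℕ)) m := by
  simp only [assembled, asmL, List.map_ofFn]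
  rfl

lemma asmL_cons (a : List DStep) (F : List (List DStep)) (m : ℕ) :
    asmL (a :: F) m = a ++ true :: asmL F m := by
  simp [asmL]

lemma dyck_sum {k : ℕ} {b : List DStep} (hb : IsDyck k b) :
    (b.map (stepVal k)).sum = 0 := by
  have := hb.2
  simpa [height] using this

lemma dyck_prefix {k : ℕ} {b : List DStep} (hb : IsDyck k b) {j : ℕ} (hj : j ≤ b.length) :
    0 ≤ ((b.take j).map (stepVal k)).sum := by
  have := hb.1 j hj
  simpa [height] using this

lemma asmL_neg_step {k : ℕ} (F : List (List DStep)) (m : ℕ)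
    (hF : ∀ b ∈ F, IsDyck k b) : ∀ j : ℕ,
    (((asmL F m).take j).map (stepVal k)).sum < 0 → (asmL F m).getD j false = false := by
  induction F with
  | nil =>
    intro j _
    have h0 : asmL ([] : List (List DStep)) m = List.replicate m false := by simp [asmL]
    rw [h0]
    rcases lt_or_ge j m with h | h
    · rw [List.getD_eq_getElem _ _ (by simpa using h)]; simp
    · exact List.getD_eq_default _ _ (by simpa using h)
  | cons a F ih =>
    intro j hneg
    have ha : IsDyck k a := hF a (by simp)
    rw [asmL_cons] at hneg ⊢
    rcases le_or_gt j a.length with hj | hj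
    · exfalso
      rw [List.take_append_of_le_length hj] at hneg
      have := dyck_prefix ha hj
      linarith
    · set j' := j - a.length - 1 with hj'
      have hdec : j - a.length = j' + 1 := by omega
      have htake : (a ++ true :: asmL F m).take j
          = a ++ true :: (asmL F m).take j' := by
        rw [List.take_append, List.take_of_length_le (by omega), hdec]
        rfl
      rw [htake] at hneg
      have hsum : (((asmL F m).take j').map (stepVal k)).sum < 0 := by
        rw [List.map_append, List.sum_append, dyck_sum ha] at hneg
        simp only [List.map_cons, List.sum_cons, stepVal, if_true] at hneg
        linarith
      have := ih (fun b hb => hF b (by simp [hb])) j' hsum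
      rw [List.getD_append_right _ _ _ _ (by omega), hdec]
      simpa using this

lemma head_len_le {k : ℕ} {a b X Y : List DStep}
    (ha : IsDyck k a) (hb : IsDyck k b)
    (hX : ∀ j, ((X.take j).map (stepVal k)).sum < 0 → X.getD j false = false)
    (heq : a ++ true :: X = b ++ true :: Y) : b.length ≤ a.length := by
  by_contra hcon
  push_neg at hcon
  set j' := b.length - a.length - 1 with hj'
  have hdec : b.length - a.length = j' + 1 := by omega
  have h1 : (a ++ true :: X).take b.length = a ++ true :: X.take j' := by
    rw [List.take_append, List.take_of_length_le (by omega), hdec]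
    rfl
  have h2 : (b ++ true :: Y).take b.length = b := by
    rw [List.take_append_of_le_length le_rfl, List.take_of_length_le le_rfl]
  have hsum : ((X.take j').map (stepVal k)).sum = -1 := by
    have e : a ++ true :: X.take j' = b := by rw [← h1, heq, h2]
    have := congrArg (fun L => (L.map (stepVal k)).sum) e
    simp only [List.map_append, List.sum_append, List.map_cons, List.sum_cons] at this
    rw [dyck_sum hb, dyck_sum ha] at this
    simp only [stepVal, if_true] at this
    linarith
  have hstep : X.getD j' false = false := hX _ (by rw [hsum]; norm_num)
  have h3 : (b ++ true :: Y).getD b.length false = true := by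
    rw [List.getD_append_right _ _ _ _ le_rfl]
    simp
  have h4 : (a ++ true :: X).getD b.length false = X.getD j' false := by
    rw [List.getD_append_right _ _ _ _ (by omega), hdec]
    rfl
  rw [heq, h3] at h4
  rw [hstep] at h4
  exact absurd h4 (by simp)

lemma asmL_inj {k : ℕ} : ∀ (F G : List (List DStep)) (m : ℕ),
    (∀ b ∈ F, IsDyck k b) → (∀ b ∈ G, IsDyck k b) →
    F.length = G.length → asmL F m = asmL G m → F = G := by
  intro F
  induction F with
  | nil =>
    intro G m _ _ hlen _
    exact (List.length_eq_zero_iff.mp hlen.symm).symm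
  | cons a F ih =>
    intro G m hF hG hlen heq
    match G with
    | [] => simp at hlen
    | b :: G =>
      rw [asmL_cons, asmL_cons] at heq
      have ha : IsDyck k a := hF a (by simp)
      have hb : IsDyck k b := hG b (by simp)
      have hXb : b.length ≤ a.length :=
        head_len_le ha hb (asmL_neg_step F m (fun c hc => hF c (by simp [hc]))) heq
      have hXa : a.length ≤ b.length :=
        head_len_le hb ha (asmL_neg_step G m (fun c hc => hG c (by simp [hc]))) heq.symm
      obtain ⟨hab, htail⟩ := List.append_inj heq (le_antisymm hXa hXb)
      have htail' : asmL F m = asmL G m := by injection htail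
      have : F = G := ih G m (fun c hc => hF c (by simp [hc]))
        (fun c hc => hG c (by simp [hc])) (by simpa using hlen) htail'
      rw [hab, this]

lemma exists_split : ∀ (F : List (List DStep)), F ≠ [] → ∀ m, ∃ T,
    asmL F m = T ++ true :: List.replicate m false := by
  intro F
  induction F with
  | nil => intro h; exact absurd rfl h
  | cons a F ih =>
    intro _ m
    rcases eq_or_ne F [] with rfl | hF
    · exact ⟨a, by simp [asmL]⟩
    · obtain ⟨T, hT⟩ := ih hF m
      exact ⟨a ++ true :: T, by rw [asmL_cons, hT]; simp⟩

lemma takeWhile_rep (m : ℕ) (T : List Bool) :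
    (List.replicate m false ++ true :: T).takeWhile (fun s => !s) = List.replicate m false := by
  induction m with
  | zero => simp [List.takeWhile]
  | succ m ih => simp [List.replicate_succ, List.takeWhile_cons, ih]

lemma dsl_asmL (F : List (List DStep)) (hF : F ≠ []) (m : ℕ) :
    downSuffixLen (asmL F m) = m := by
  obtain ⟨T, hT⟩ := exists_split F hF m
  rw [hT]
  unfold downSuffixLen
  have hrev : (T ++ true :: List.replicate m false).reverse
      = List.replicate m false ++ true :: T.reverse := by
    simp [List.reverse_append]
  rw [hrev, takeWhile_rep]
  simp

lemma assembled_congr {k m : ℕ} {f g : ℕ → List DStep} (h : ∀ j < k*m, f j = g j) :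
    assembled k m f = assembled k m g := by
  unfold assembled
  congr 1
  exact congrArg _ (congrArg List.ofFn (funext fun j => by rw [h j j.isLt]))

lemma assembled_ne_nil {k m : ℕ} (hm : 1 ≤ m) (f : ℕ → List DStep) :
    assembled k m f ≠ [] := by
  intro h
  have := congrArg List.length h
  simp [assembled] at this
  omega

lemma cyclicPerm_lt {k m : ℕ} (hk : 1 ≤ k) {j : ℕ} (hj : j < k*m) :
    cyclicPerm k j < k*m := by
  unfold cyclicPerm
  split
  · rename_i h0
    have hdm := Nat.div_add_mod j k
    have hq : j = k * (j / k) := by omega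
    have hqm : j / k < m := by
      by_contra hc
      push_neg at hc
      have : k * m ≤ k * (j / k) := Nat.mul_le_mul_left k hc
      omega
    have : k * (j / k) + k ≤ k * m := by
      have := Nat.mul_le_mul_left k hqm
      nlinarith
    omega
  · omega

lemma cyclicPerm_iter_lt {k m : ℕ} (hk : 1 ≤ k) (t : ℕ) : ∀ {j : ℕ}, j < k*m →
    (cyclicPerm k)^[t] j < k*m := by
  induction t with
  | zero => intro j hj; simpa using hj
  | succ t ih =>
    intro j hj
    rw [Function.iterate_succ_apply]
    exact ih (cyclicPerm_lt hk hj)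

lemma cyclicPerm_iter_sub {k : ℕ} (q : ℕ) : ∀ (s r : ℕ), s ≤ r → r < k →
    (cyclicPerm k)^[s] (k*q + r) = k*q + (r - s) := by
  intro s
  induction s with
  | zero => intro r _ _; simp
  | succ s ih =>
    intro r hsr hrk
    rw [Function.iterate_succ_apply]
    have hmod : (k*q + r) % k = r := by
      rw [Nat.mul_add_mod, Nat.mod_eq_of_lt hrk]
    have hr0 : r ≠ 0 := by omega
    have hstep : cyclicPerm k (k*q + r) = k*q + (r - 1) := by
      unfold cyclicPerm
      rw [hmod, if_neg hr0]
      omega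
    rw [hstep, ih (r-1) (by omega) (by omega)]
    congr 1
    omega

lemma cyclicPerm_iter_k {k : ℕ} (hk : 1 ≤ k) (j : ℕ) : (cyclicPerm k)^[k] j = j := by
  set q := j / k with hq
  set r := j % k with hr
  have hrk : r < k := Nat.mod_lt _ (by omega)
  have hj : j = k*q + r := by rw [hq, hr]; exact (Nat.div_add_mod j k).symm
  have e1 : (k - r) + r = k := by omega
  have e := Function.iterate_add_apply (cyclicPerm k) (k - r) r (k*q + r)
  rw [e1] at e
  rw [hj, e, cyclicPerm_iter_sub q r r le_rfl hrk]
  simp only [Nat.sub_self, Nat.add_zero]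
  have hkr : k - r = (k - r - 1) + 1 := by omega
  rw [hkr, Function.iterate_succ_apply]
  have h0 : cyclicPerm k (k*q) = k*q + (k-1) := by
    unfold cyclicPerm
    rw [Nat.mul_mod_right, if_pos rfl]
  rw [h0, cyclicPerm_iter_sub q (k-r-1) (k-1) (by omega) (by omega)]
  congr 1
  omega

/-- The cyclic shift `κ` is a bijection of the set of `k`-Dyck paths of
down-size `n` to itself, and `κ^k` is the identity.  Here `κ` is characterized by its
defining property: the empty path is fixed, and a path with decomposition
`Q = Q_0^{(0)} u ⋯ Q_{km-1}^{(km-1)} u d^m` (with `m ≥ 1` the length of the maximal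
down-step suffix) is sent to the path with blocks permuted by `π_m = cyclicPerm k`. -/
theorem cyclic_shift_bijective_order_k (k n : ℕ) (hk : 1 ≤ k)
    (κ : {P : List DStep // IsDyck k P ∧ P.count false = n} →
         {P : List DStep // IsDyck k P ∧ P.count false = n})
    (hκ : ∀ Q, (Q.val = [] → κ Q = Q) ∧
      (Q.val ≠ [] → ∃ m : ℕ, 1 ≤ m ∧ ∃ f : ℕ → List DStep,
        (∀ j < k * m, IsDyck k (f j)) ∧
        Q.val = assembled k m f ∧
        (κ Q).val = assembled k m (fun j => f (cyclicPerm k j)))) :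
    Function.Bijective κ ∧ κ^[k] = id := by
  have key : ∀ Q, κ^[k] Q = Q := by
    intro Q
    by_cases hQ0 : Q.val = []
    · exact Function.iterate_fixed ((hκ Q).1 hQ0) k
    · obtain ⟨m, hm, f, hf, hQ, -⟩ := (hκ Q).2 hQ0
      have hkm : 0 < k * m := Nat.mul_pos hk hm
      have main : ∀ t, (κ^[t] Q).val
          = assembled k m (fun j => f ((cyclicPerm k)^[t] j)) := by
        intro t
        induction t with
        | zero => simpa using hQ
        | succ t ih =>
          set g : ℕ → List DStep := fun j => f ((cyclicPerm k)^[t] j) with hgdef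
          have hg : ∀ j < k*m, IsDyck k (g j) :=
            fun j hj => hf _ (cyclicPerm_iter_lt hk t hj)
          have hne : (κ^[t] Q).val ≠ [] := by rw [ih]; exact assembled_ne_nil hm _
          obtain ⟨m', hm', f', hf', hQ', hκQ'⟩ := (hκ (κ^[t] Q)).2 hne
          have hkm' : 0 < k * m' := Nat.mul_pos hk hm'
          have heqa : asmL (List.ofFn fun j : Fin (k*m) => g (j : ℕ)) m
              = asmL (List.ofFn fun j : Fin (k*m') => f' (j : ℕ)) m' := by
            rw [← assembled_eq_asmL, ← assembled_eq_asmL, ← ih, hQ']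
          have hofn : ∀ (N : ℕ) (h : ℕ → List DStep),
              0 < N → (List.ofFn fun j : Fin N => h (j : ℕ)) ≠ [] := by
            intro N h hN hcon
            have := congrArg List.length hcon
            simp at this
            omega
          have hmm : m = m' := by
            have h1 := dsl_asmL (List.ofFn fun j : Fin (k*m) => g (j : ℕ))
              (hofn _ _ hkm) m
            have h2 := dsl_asmL (List.ofFn fun j : Fin (k*m') => f' (j : ℕ))
              (hofn _ _ hkm') m'
            rw [heqa, h2] at h1
            omega
          subst hmm
          have hFG : (List.ofFn fun j : Fin (k*m) => g (j : ℕ))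
              = (List.ofFn fun j : Fin (k*m) => f' (j : ℕ)) := by
            refine asmL_inj (k := k) _ _ m ?_ ?_ ?_ heqa
            · intro b hb
              obtain ⟨i, rfl⟩ := List.mem_ofFn.mp hb
              exact hg _ i.isLt
            · intro b hb
              obtain ⟨i, rfl⟩ := List.mem_ofFn.mp hb
              exact hf' _ i.isLt
            · simp
          have hfg : ∀ j < k*m, f' j = g j := by
            intro j hj
            have := congrFun (List.ofFn_inj.mp hFG) ⟨j, hj⟩
            exact this.symm
          rw [Function.iterate_succ_apply', hκQ']
          apply assembled_congr
          intro j hj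
          rw [hfg _ (cyclicPerm_lt hk hj), hgdef, Function.iterate_succ_apply]
      apply Subtype.ext
      rw [main k, hQ]
      exact assembled_congr (fun j _ => by rw [cyclicPerm_iter_k hk])
  obtain ⟨k', rfl⟩ : ∃ k', k = k' + 1 := ⟨k - 1, by omega⟩
  refine ⟨⟨fun x y hxy => ?_, fun y => ⟨κ^[k'] y, ?_⟩⟩, funext key⟩
  · have hx := key x
    have hy := key y
    rw [Function.iterate_succ_apply, hxy, ← Function.iterate_succ_apply] at hx
    exact hx.symm.trans hy
  · have := key y
    rwa [Function.iterate_succ_apply'] at this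
end

section
/- Let k ≥ 1 and n ≥ 1. Then for every integer r with 0 ≤ r ≤ n-1, the number of k-Dyck paths P of down-size n whose total number of peaks (including the rightmost peak) is r + 1, i.e. with pk(P) = r where pk counts non-rightmost peaks, equals (1/n) · C(n, r+1) · C(kn, r), where C(a, b) denotes the binomial coefficient. -/
/-! ### basic height lemmas -/

def NN (k : ℕ) (s : ℤ) (P : List DStep) : Prop := ∀ j ≤ P.length, 0 ≤ height k s P j

lemma height_append_left (k : ℕ) (s : ℤ) (X Y : List DStep) {j : ℕ} (hj : j ≤ X.length) :
    height k s (X ++ Y) j = height k s X j := by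
  unfold height
  rw [List.take_append, Nat.sub_eq_zero_of_le hj, List.take_zero,
    List.append_nil]

lemma height_append_right (k : ℕ) (s : ℤ) (X Y : List DStep) (j : ℕ) :
    height k s (X ++ Y) (X.length + j) = height k (height k s X X.length) Y j := by
  unfold height
  rw [List.take_append, List.take_of_length_le (by simp)]
  simp [add_assoc, List.take_of_length_le (le_refl X.length)]

lemma NN_append (k : ℕ) (s : ℤ) (X Y : List DStep) :
    NN k s (X ++ Y) ↔ NN k s X ∧ NN k (height k s X X.length) Y := by
  constructor
  · intro h
    refine ⟨fun j hj => ?_, fun j hj => ?_⟩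
    · have := h j (by simp; omega)
      rwa [height_append_left k s X Y hj] at this
    · have := h (X.length + j) (by simp; omega)
      rwa [height_append_right] at this
  · rintro ⟨h1, h2⟩ j hj
    rcases le_or_gt j X.length with h | h
    · rw [height_append_left k s X Y h]; exact h1 j h
    · have : j = X.length + (j - X.length) := by omega
      rw [this, height_append_right]
      exact h2 _ (by simp at hj; omega)

/-! ### blocks -/

def block (x y : ℕ) : List DStep := List.replicate x true ++ List.replicate y false

def blocksPath : List ℕ → List ℕ → List DStep
  | x :: a, y :: b => block x y ++ blocksPath a b
  | _, _ => []

@[simp] lemma blocksPath_nil : blocksPath [] [] = [] := rfl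
@[simp] lemma blocksPath_nil' (b : List ℕ) : blocksPath [] b = [] := by cases b <;> rfl
@[simp] lemma blocksPath_cons (x y : ℕ) (a b : List ℕ) :
    blocksPath (x :: a) (y :: b) = block x y ++ blocksPath a b := rfl

@[simp] lemma block_length (x y : ℕ) : (block x y).length = x + y := by simp [block]

lemma height_replicate_true (k : ℕ) (s : ℤ) (j : ℕ) (x : ℕ) :
    height k s (List.replicate x true) j = s + (min j x : ℕ) := by
  unfold height
  rw [List.take_replicate]
  simp [stepVal]

lemma height_block (k : ℕ) (s : ℤ) (x y j : ℕ) :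
    height k s (block x y) j =
      if j ≤ x then s + j else s + x - k * (min j (x+y) - x : ℕ) := by
  unfold block height
  rw [List.take_append, List.take_replicate, List.take_replicate]
  simp only [List.map_append, List.sum_append, List.map_replicate, List.sum_replicate,
    List.length_replicate]
  split_ifs with h
  · have : min (j - x) y = 0 := by omega
    simp [stepVal, this, min_eq_left h]
  · have h1 : min j x = x := by omega
    have h2 : min (j-x) y = min j (x+y) - x := by omega
    simp [stepVal, h1, ← h2]
    push_cast
    ring

lemma height_block_end (k : ℕ) (s : ℤ) (x y : ℕ) :
    height k s (block x y) (x + y) = s + x - k * y := by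
  rw [height_block]
  rcases Nat.eq_zero_or_pos y with h | h
  · simp [h]
  · rw [if_neg (by omega)]
    congr 2
    omega

lemma NN_block (k : ℕ) (s : ℤ) (x y : ℕ) :
    NN k s (block x y) ↔ 0 ≤ s ∧ 0 ≤ s + x - k * y := by
  constructor
  · intro h
    refine ⟨by simpa [height] using h 0 (by simp), ?_⟩
    have := h (x + y) (by simp)
    rwa [height_block_end] at this
  · rintro ⟨h0, h1⟩ j hj
    rw [height_block]
    split_ifs with h
    · positivity
    · have h2 : min j (x+y) ≤ x + y := min_le_right _ _
      have h3 : min j (x+y) - x ≤ y := by omega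
      have hle : ((min j (x+y) - x : ℕ) : ℤ) ≤ (y : ℤ) := by exact_mod_cast h3
      push_cast
      nlinarith [Int.ofNat_nonneg k]

/-! ### counting steps -/

lemma count_false_blocksPath : ∀ (a b : List ℕ), a.length = b.length →
    (blocksPath a b).count false = b.sum
  | [], [], _ => by simp
  | x :: a, y :: b, h => by
    simp only [blocksPath_cons, block, List.count_append, List.sum_cons]
    rw [count_false_blocksPath a b (by simpa using h)]
    simp [List.count_replicate]

lemma count_true_blocksPath : ∀ (a b : List ℕ), a.length = b.length →
    (blocksPath a b).count true = a.sum
  | [], [], _ => by simp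
  | x :: a, y :: b, h => by
    simp only [blocksPath_cons, block, List.count_append, List.sum_cons]
    rw [count_true_blocksPath a b (by simpa using h)]
    simp [List.count_replicate]

lemma sum_stepVal (k : ℕ) : ∀ (P : List DStep),
    ((P.map (stepVal k)).sum) = (P.count true : ℤ) - k * (P.count false : ℤ)
  | [] => by simp
  | s :: P => by
    rw [List.map_cons, List.sum_cons, sum_stepVal k P]
    cases s <;> simp [stepVal, List.count_cons] <;> push_cast <;> ring

lemma height_eq_counts (k : ℕ) (P : List DStep) :
    height k 0 P P.length = (P.count true : ℤ) - k * (P.count false : ℤ) := by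
  unfold height
  rw [List.take_of_length_le (le_refl _), sum_stepVal]
  ring

/-! ### NN for blocksPath -/

lemma height_blocksPath_end (k : ℕ) (s : ℤ) : ∀ (a b : List ℕ), a.length = b.length →
    height k s (blocksPath a b) (blocksPath a b).length = s + a.sum - k * b.sum
  | [], [], _ => by simp [height]
  | x :: a, y :: b, h => by
    simp only [blocksPath_cons]
    rw [List.length_append, height_append_right, block_length,
      height_blocksPath_end k _ a b (by simpa using h), height_block_end]
    push_cast
    simp only [List.map_cons, List.sum_cons]
    ring

lemma NN_blocksPath (k : ℕ) (s : ℤ) : ∀ (a b : List ℕ), a.length = b.length →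
    (NN k s (blocksPath a b) ↔
      ∀ m ≤ a.length, 0 ≤ s + ((a.take m).sum : ℤ) - k * ((b.take m).sum : ℤ))
  | [], [], _ => by
    constructor
    · intro hNN m hm
      have h0 := hNN 0 (by simp)
      simp [height] at h0
      simp at hm
      simpa [hm] using h0
    · intro h j hj
      simp at hj; simp [hj, height]
      simpa using h 0 (by simp)
  | x :: a, y :: b, h => by
    have hl : a.length = b.length := by simpa using h
    rw [blocksPath_cons, NN_append, NN_block, block_length, height_block_end,
      NN_blocksPath k _ a b hl]
    constructor
    · rintro ⟨⟨hs, hb⟩, hrest⟩ m hm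
      match m with
      | 0 => simpa using hs
      | Nat.succ m =>
        have := hrest m (by simpa using hm)
        simp only [List.take_succ_cons, List.sum_cons]
        push_cast at this ⊢
        linarith
    · intro hall
      refine ⟨⟨by simpa using hall 0 (by simp), ?_⟩, fun m hm => ?_⟩
      · have := hall 1 (by simp)
        simpa using this
      · have := hall (m+1) (by simpa using hm)
        simp only [List.take_succ_cons, List.sum_cons] at this
        push_cast at this ⊢
        linarith

/-! ### peaks -/

lemma mem_peakSet {P : List DStep} {j : ℕ} :
    j ∈ peakSet P ↔ j < P.length ∧ P.getD j false = true ∧ P.getD (j+1) true = false := by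
  simp [peakSet, and_assoc]

lemma getD_replicate'' {α} (c d : α) {j x : ℕ} (h : j < x) :
    (List.replicate x c).getD j d = c := by
  rw [List.getD_eq_getElem _ _ (by simpa using h)]
  simp

lemma peakSet_block_append (x y : ℕ) (hx : 1 ≤ x) (hy : 1 ≤ y) (Q : List DStep) :
    peakSet (block x y ++ Q) = insert (x-1) ((peakSet Q).image (· + (x+y))) := by
  ext j
  rw [mem_peakSet, Finset.mem_insert, Finset.mem_image]
  simp only [List.length_append, block_length]
  rcases lt_or_ge j (x+y) with hj | hj
  · have hgd : ∀ (d : Bool) i, i < x + y → (block x y ++ Q).getD i d = (block x y).getD i d := by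
      intro d i hi
      exact List.getD_append _ _ _ _ (by simpa using hi)
    constructor
    · rintro ⟨hlen, h1, h2⟩
      rw [hgd _ j hj] at h1
      left
      by_contra hne
      rcases lt_or_ge j x with hjx | hjx
      · -- j < x, so in true part; j ≠ x-1 means j+1 < x
        have hj1 : j + 1 < x := by omega
        rw [hgd _ (j+1) (by omega)] at h2
        rw [show (block x y) = List.replicate x true ++ List.replicate y false from rfl,
          List.getD_append _ _ _ _ (by simpa using hj1), getD_replicate'' _ _ hj1] at h2
        exact Bool.noConfusion h2
      · rw [show (block x y) = List.replicate x true ++ List.replicate y false from rfl,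
          List.getD_append_right _ _ _ _ (by simpa using hjx),
          getD_replicate'' _ _ (by simp; omega)] at h1
        exact Bool.noConfusion h1
    · rintro (heq | ⟨w, hw, hwj⟩)
      · subst heq
        refine ⟨by omega, ?_, ?_⟩
        · rw [hgd _ _ (by omega), show (block x y) = List.replicate x true ++ List.replicate y false from rfl,
            List.getD_append _ _ _ _ (by simp; omega), getD_replicate'' _ _ (by omega)]
        · have hx1 : x - 1 + 1 = x := by omega
          rw [hgd _ _ (by omega), hx1, show (block x y) = List.replicate x true ++ List.replicate y false from rfl,
            List.getD_append_right _ _ _ _ (by simp), getD_replicate'' _ _ (by simp; omega)]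
      · rw [mem_peakSet] at hw
        omega
  · have hgd : ∀ (d : Bool) i, x + y ≤ i → (block x y ++ Q).getD i d = Q.getD (i - (x+y)) d := by
      intro d i hi
      rw [List.getD_append_right _ _ _ _ (by simpa using hi)]
      simp
    rw [hgd _ j hj, hgd _ (j+1) (by omega)]
    have h1 : j + 1 - (x + y) = (j - (x+y)) + 1 := by omega
    rw [h1]
    constructor
    · rintro ⟨hlen, h2, h3⟩
      right
      exact ⟨j - (x+y), mem_peakSet.2 ⟨by omega, h2, h3⟩, by omega⟩
    · rintro (heq | ⟨w, hw, hwj⟩)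
      · omega
      · rw [mem_peakSet] at hw
        have : w = j - (x+y) := by omega
        subst this
        exact ⟨by omega, hw.2.1, hw.2.2⟩

lemma peakSet_nil : peakSet [] = ∅ := by simp [peakSet]

lemma card_peakSet_blocksPath : ∀ (a b : List ℕ), a.length = b.length →
    (∀ u ∈ a, 0 < u) → (∀ v ∈ b, 0 < v) →
    (peakSet (blocksPath a b)).card = a.length
  | [], [], _, _, _ => by simp [peakSet_nil]
  | x :: a, y :: b, h, ha, hb => by
    rw [blocksPath_cons, peakSet_block_append x y (ha x (by simp)) (hb y (by simp)),
      Finset.card_insert_of_notMem, Finset.card_image_of_injective _ (add_left_injective _),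
      card_peakSet_blocksPath a b (by simpa using h) (fun u hu => ha u (by simp [hu]))
        (fun v hv => hb v (by simp [hv]))]
    · simp
    · simp only [Finset.mem_image, not_exists, not_and]
      rintro w hw
      have hx := ha x (by simp)
      have hy := hb y (by simp)
      omega

lemma pkNR_eq_card_sub_one (P : List DStep) (h : (peakSet P).Nonempty) :
    pkNR P = (peakSet P).card - 1 := by
  have hmax := Finset.max'_mem _ h
  have hfil : ((peakSet P).filter fun j => ∃ j' ∈ peakSet P, j < j')
      = (peakSet P).erase ((peakSet P).max' h) := by
    ext j
    simp only [Finset.mem_filter, Finset.mem_erase]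
    constructor
    · rintro ⟨hj, j', hj', hlt⟩
      exact ⟨ne_of_lt (lt_of_lt_of_le hlt (Finset.le_max' _ _ hj')), hj⟩
    · rintro ⟨hne, hj⟩
      exact ⟨hj, _, hmax, lt_of_le_of_ne (Finset.le_max' _ _ hj) hne⟩
  rw [pkNR, hfil, Finset.card_erase_of_mem hmax]

/-! ### injectivity of blocksPath -/

lemma repl_cancel_true : ∀ (x x' : ℕ) (Z Z' : List Bool),
    (List.replicate x true ++ false :: Z) = (List.replicate x' true ++ false :: Z') →
    x = x' ∧ Z = Z'
  | 0, 0, Z, Z', h => by simpa using h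
  | 0, x'+1, Z, Z', h => by simp [List.replicate_succ] at h
  | x+1, 0, Z, Z', h => by simp [List.replicate_succ] at h
  | x+1, x'+1, Z, Z', h => by
    simp only [List.replicate_succ, List.cons_append, List.cons.injEq, true_and] at h
    have := repl_cancel_true x x' Z Z' h
    exact ⟨by omega, this.2⟩

lemma repl_cancel_false : ∀ (y y' : ℕ) (Z Z' : List Bool),
    (Z = [] ∨ Z.head? = some true) → (Z' = [] ∨ Z'.head? = some true) →
    (List.replicate y false ++ Z) = (List.replicate y' false ++ Z') →
    y = y' ∧ Z = Z'
  | 0, 0, Z, Z', _, _, h => by simpa using h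
  | 0, y'+1, Z, Z', hZ, _, h => by
    simp only [List.replicate_succ, List.nil_append, List.cons_append] at h
    subst h
    simp at hZ
  | y+1, 0, Z, Z', _, hZ', h => by
    simp only [List.replicate_succ, List.nil_append, List.cons_append,
      List.replicate_zero] at h
    rw [← h] at hZ'
    simp at hZ'
  | y+1, y'+1, Z, Z', hZ, hZ', h => by
    simp only [List.replicate_succ, List.cons_append, List.cons.injEq, true_and] at h
    have := repl_cancel_false y y' Z Z' hZ hZ' h
    exact ⟨by omega, this.2⟩

lemma blocksPath_head : ∀ (a b : List ℕ), a.length = b.length → (∀ u ∈ a, 0 < u) →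
    (blocksPath a b = [] ∨ (blocksPath a b).head? = some true)
  | [], [], _, _ => Or.inl rfl
  | x :: a, y :: b, h, ha => by
    right
    have hx := ha x (by simp)
    obtain ⟨x', rfl⟩ : ∃ x', x = x' + 1 := ⟨x - 1, by omega⟩
    simp [block, List.replicate_succ]

lemma block_append_eq (x y : ℕ) (hx : 0 < x) (hy : 0 < y) (P : List DStep) :
    block x y ++ P = List.replicate x true ++ (false :: (List.replicate (y-1) false ++ P)) := by
  obtain ⟨y', rfl⟩ : ∃ y', y = y' + 1 := ⟨y - 1, by omega⟩
  simp [block, List.replicate_succ]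

lemma blocksPath_inj : ∀ (a b a' b' : List ℕ), a.length = b.length → a'.length = b'.length →
    (∀ u ∈ a, 0 < u) → (∀ v ∈ b, 0 < v) → (∀ u ∈ a', 0 < u) → (∀ v ∈ b', 0 < v) →
    blocksPath a b = blocksPath a' b' → a = a' ∧ b = b'
  | [], [], [], [], _, _, _, _, _, _, _ => ⟨rfl, rfl⟩
  | [], [], x' :: a', y' :: b', _, h', _, _, ha', _, heq => by
    exfalso
    have := congrArg List.length heq
    simp at this
    have := ha' x' (by simp)
    omega
  | x :: a, y :: b, [], [], h, _, ha, _, _, _, heq => by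
    exfalso
    have := congrArg List.length heq
    simp at this
    have := ha x (by simp)
    omega
  | [], yy :: b, _, _, h, _, _, _, _, _, _ => by simp at h
  | xx :: a, [], _, _, h, _, _, _, _, _, _ => by simp at h
  | _, _, [], yy :: b', _, h', _, _, _, _, _ => by simp at h'
  | _, _, xx :: a', [], _, h', _, _, _, _, _ => by simp at h'
  | x :: a, y :: b, x' :: a', y' :: b', h, h', ha, hb, ha', hb', heq => by
    have hx := ha x (by simp); have hy := hb y (by simp)
    have hx' := ha' x' (by simp); have hy' := hb' y' (by simp)
    rw [blocksPath_cons, blocksPath_cons, block_append_eq x y hx hy,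
      block_append_eq x' y' hx' hy'] at heq
    obtain ⟨hxx, heq2⟩ := repl_cancel_true _ _ _ _ heq
    obtain ⟨hyy, heq3⟩ := repl_cancel_false (y-1) (y'-1) _ _
      (by rcases blocksPath_head a b (by simpa using h) (fun u hu => ha u (by simp [hu]))
            with h0 | h0
          · left; exact h0
          · right; exact h0)
      (by rcases blocksPath_head a' b' (by simpa using h') (fun u hu => ha' u (by simp [hu]))
            with h0 | h0
          · left; exact h0
          · right; exact h0) heq2
    obtain ⟨hA, hB⟩ := blocksPath_inj a b a' b' (by simpa using h) (by simpa using h')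
      (fun u hu => ha u (by simp [hu])) (fun v hv => hb v (by simp [hv]))
      (fun u hu => ha' u (by simp [hu])) (fun v hv => hb' v (by simp [hv])) heq3
    refine ⟨by rw [hxx, hA], by rw [hA] at *; rw [hB]; congr 1; omega⟩

/-! ### decomposition (surjectivity) -/

lemma dropWhile_head_not (p : Bool → Bool) : ∀ (l : List Bool),
    l.dropWhile p = [] ∨ ∃ c t, l.dropWhile p = c :: t ∧ p c = false
  | [] => Or.inl rfl
  | a :: t => by
    by_cases hpa : p a = true
    · rw [List.dropWhile_cons_of_pos hpa]
      exact dropWhile_head_not p t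
    · rw [List.dropWhile_cons_of_neg hpa]
      exact Or.inr ⟨a, t, rfl, by simpa using hpa⟩

lemma takeWhile_eq_replicate_true (l : List Bool) :
    l.takeWhile (fun s => s) = List.replicate (l.takeWhile (fun s => s)).length true := by
  apply List.eq_replicate_iff.2
  exact ⟨rfl, fun b hb => by simpa using List.mem_takeWhile_imp hb⟩

lemma takeWhile_eq_replicate_false (l : List Bool) :
    l.takeWhile (fun s => !s) = List.replicate (l.takeWhile (fun s => !s)).length false := by
  apply List.eq_replicate_iff.2
  exact ⟨rfl, fun b hb => by simpa using List.mem_takeWhile_imp hb⟩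

lemma decompose : ∀ (N : ℕ) (P : List DStep), P.length ≤ N →
    (P = [] ∨ P.head? = some true) → P.getLast? ≠ some true →
    ∃ a b : List ℕ, a.length = b.length ∧ (∀ u ∈ a, 0 < u) ∧ (∀ v ∈ b, 0 < v) ∧
      blocksPath a b = P := by
  intro N
  induction N with
  | zero =>
    intro P hP _ _
    have : P = [] := List.length_eq_zero_iff.1 (by omega)
    exact ⟨[], [], by simp, by simp, by simp, by simp [this]⟩
  | succ N ih =>
    intro P hP hhead hlast
    rcases hhead with rfl | hhead
    · exact ⟨[], [], by simp, by simp, by simp, by simp⟩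
    set I : Bool → Bool := fun s => s with hI
    set U := P.takeWhile I with hU
    set P1 := P.dropWhile I with hP1
    have hUP : U ++ P1 = P := List.takeWhile_append_dropWhile (p := I) (l := P)
    obtain ⟨c, Q, hc⟩ : ∃ c Q, P = c :: Q := by
      cases P with
      | nil => simp at hhead
      | cons c Q => exact ⟨c, Q, rfl⟩
    have hctrue : c = true := by rw [hc] at hhead; simpa using hhead
    have hx : 1 ≤ U.length := by
      rw [hU, hc, hctrue]
      rw [List.takeWhile_cons_of_pos (by simp [hI])]
      simp
    have hUrep : U = List.replicate U.length true := takeWhile_eq_replicate_true P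
    -- P1 is nonempty
    rcases dropWhile_head_not I P with hP1nil | ⟨c1, Q1, hc1, hc1f⟩
    · exfalso
      rw [← hP1] at hP1nil
      rw [hP1nil, List.append_nil] at hUP
      obtain ⟨m, hm⟩ : ∃ m, U.length = m + 1 := ⟨U.length - 1, by omega⟩
      apply hlast
      rw [← hUP, hUrep, hm, List.replicate_succ', List.getLast?_concat]
    have hc1' : c1 = false := by simpa [hI] using hc1f
    rw [← hP1] at hc1
    set J : Bool → Bool := fun s => !s with hJ
    set V := P1.takeWhile J with hV
    set P2 := P1.dropWhile J with hP2
    have hVP : V ++ P2 = P1 := List.takeWhile_append_dropWhile (p := J) (l := P1)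
    have hy : 1 ≤ V.length := by
      rw [hV, hc1, hc1']
      rw [List.takeWhile_cons_of_pos (by simp [hJ])]
      simp
    have hVrep : V = List.replicate V.length false := takeWhile_eq_replicate_false P1
    have hP2head : P2 = [] ∨ P2.head? = some true := by
      rcases dropWhile_head_not J P1 with h0 | ⟨c2, Q2, hc2, hc2f⟩
      · left; rw [hP2]; exact h0
      · right
        rw [hP2, hc2]
        have : c2 = true := by simpa [hJ] using hc2f
        rw [this]
        rfl
    have hP2last : P2.getLast? ≠ some true := by
      rcases hP2head with h0 | _
      · rw [h0]; simp
      · intro hcon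
        apply hlast
        rw [← hUP, ← hVP, List.getLast?_append, List.getLast?_append, hcon]
        rfl
    have hP2len : P2.length ≤ N := by
      have h1 : P1.length = P.length - U.length := by
        rw [← hUP]; simp
      have h2 : P2.length ≤ P1.length := by
        rw [← hVP]; simp
      omega
    obtain ⟨a, b, hab, ha, hb, hbp⟩ := ih P2 hP2len hP2head hP2last
    refine ⟨U.length :: a, V.length :: b, by simpa using hab, ?_, ?_, ?_⟩
    · intro u hu
      rcases List.mem_cons.1 hu with rfl | hu
      · omega
      · exact ha u hu
    · intro v hv
      rcases List.mem_cons.1 hv with rfl | hv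
      · omega
      · exact hb v hv
    · rw [blocksPath_cons, hbp, block, ← hUrep, ← hVrep, List.append_assoc, hVP, hUP]

/-! ### compositions -/

abbrev Comp (m p : ℕ) := {l : List ℕ // l.length = p ∧ (∀ x ∈ l, 0 < x) ∧ l.sum = m}

instance compFinite (m p : ℕ) : Finite (Comp m p) := by
  apply Finite.of_injective (f := fun l : Comp m p => (fun i : Fin p =>
    (⟨l.1.getD i 0, by
      have h1 : l.1.getD i 0 ≤ l.1.sum := by
        rcases lt_or_ge i.1 l.1.length with h | h
        · rw [List.getD_eq_getElem _ _ h]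
          exact List.single_le_sum (fun x _ => Nat.zero_le x) _ (List.getElem_mem h)
        · rw [List.getD_eq_default _ _ h]
          exact Nat.zero_le _
      have := l.2.2.2
      omega⟩ : Fin (m+1))))
  intro l l' h
  apply Subtype.ext
  apply List.ext_getElem (by rw [l.2.1, l'.2.1])
  intro i h1 h2
  have := congrFun h ⟨i, by rw [← l.2.1]; exact h1⟩
  have h3 := congrArg Fin.val this
  rw [← List.getD_eq_getElem l.1 0 h1, ← List.getD_eq_getElem l'.1 0 h2]
  exact h3

instance : Unique (Comp 0 0) := by
  refine ⟨⟨⟨[], by simp⟩⟩, ?_⟩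
  rintro ⟨l, hl⟩
  have : l = [] := List.length_eq_zero_iff.1 hl.1
  subst this
  rfl

instance (m : ℕ) : IsEmpty (Comp (m+1) 0) := by
  constructor
  rintro ⟨l, hl⟩
  have : l = [] := List.length_eq_zero_iff.1 hl.1
  subst this
  simp at hl

instance (q : ℕ) : IsEmpty (Comp 0 (q+1)) := by
  constructor
  rintro ⟨l, hl⟩
  match l, hl with
  | [], hl => simp at hl
  | x :: t, hl =>
    have h1 := hl.2.1 x (by simp)
    have h2 := hl.2.2
    simp at h2
    omega

def compEquiv (m q : ℕ) : Comp (m+1) (q+1) ≃ Comp m q ⊕ Comp m (q+1) where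
  toFun x := match x with
    | ⟨[], hx⟩ => absurd hx.1 (by simp)
    | ⟨0 :: _, hx⟩ => absurd (hx.2.1 0 (by simp)) (by simp)
    | ⟨1 :: t, hx⟩ => Sum.inl ⟨t, by
        obtain ⟨h1, h2, h3⟩ := hx
        refine ⟨by simpa using h1, fun x hx => h2 x (by simp [hx]), ?_⟩
        simp at h3
        omega⟩
    | ⟨(u+2) :: t, hx⟩ => Sum.inr ⟨(u+1) :: t, by
        obtain ⟨h1, h2, h3⟩ := hx
        refine ⟨by simpa using h1, ?_, ?_⟩
        · intro x hx
          rcases List.mem_cons.1 hx with rfl | hx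
          · omega
          · exact h2 x (by simp [hx])
        · simp at h3 ⊢
          omega⟩
  invFun x := match x with
    | Sum.inl ⟨t, ht⟩ => ⟨1 :: t, by
        obtain ⟨h1, h2, h3⟩ := ht
        refine ⟨by simpa using h1, ?_, by simp; omega⟩
        intro x hx
        rcases List.mem_cons.1 hx with rfl | hx
        · omega
        · exact h2 x hx⟩
    | Sum.inr ⟨[], ht⟩ => absurd ht.1 (by simp)
    | Sum.inr ⟨0 :: _, ht⟩ => absurd (ht.2.1 0 (by simp)) (by simp)
    | Sum.inr ⟨(v+1) :: t, ht⟩ => ⟨(v+2) :: t, by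
        obtain ⟨h1, h2, h3⟩ := ht
        refine ⟨by simpa using h1, ?_, by simp at h3 ⊢; omega⟩
        intro x hx
        rcases List.mem_cons.1 hx with rfl | hx
        · omega
        · exact h2 x (by simp [hx])⟩
  left_inv := by
    rintro ⟨l, hl⟩
    match l, hl with
    | [], hl => exact absurd hl.1 (by simp)
    | 0 :: _, hl => exact absurd (hl.2.1 0 (by simp)) (by simp)
    | 1 :: t, hl => rfl
    | (u+2) :: t, hl => rfl
  right_inv := by
    rintro (⟨t, ht⟩ | ⟨l, hl⟩)
    · rfl
    · match l, hl with
      | [], hl => exact absurd hl.1 (by simp)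
      | 0 :: _, hl => exact absurd (hl.2.1 0 (by simp)) (by simp)
      | (v+1) :: t, hl => rfl

lemma card_comp (s : ℕ) : ∀ q, Nat.card (Comp (s+1) (q+1)) = s.choose q := by
  induction s with
  | zero =>
    intro q
    rw [Nat.card_congr (compEquiv 0 q), Nat.card_sum]
    cases q with
    | zero => simp [Nat.card_unique, Nat.card_of_isEmpty]
    | succ q => simp [Nat.card_of_isEmpty]
  | succ s ih =>
    intro q
    rw [Nat.card_congr (compEquiv (s+1) q), Nat.card_sum]
    cases q with
    | zero => simp [Nat.card_of_isEmpty, ih 0]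
    | succ q => rw [ih q, ih (q+1), Nat.choose_succ_succ]

/-! ### cycle lemma -/

def Spre (c : List ℤ) (j : ℕ) : ℤ := ∑ i ∈ Finset.range j, c.getD (i % c.length) 0

lemma sum_take_eq (c : List ℤ) (m : ℕ) :
    (c.take m).sum = ∑ i ∈ Finset.range m, c.getD i 0 := by
  induction m with
  | zero => simp
  | succ m ih =>
    rw [Finset.sum_range_succ, ← ih, List.take_succ, List.sum_append,
      List.getD_eq_getElem?_getD]
    congr 1
    by_cases h : m < c.length
    · rw [List.getElem?_eq_getElem h]; simp
    · rw [List.getElem?_eq_none (by omega)]; simp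

lemma Spre_add (c : List ℤ) (a b : ℕ) :
    Spre c (a + b) = Spre c a + ∑ i ∈ Finset.range b, c.getD ((a + i) % c.length) 0 := by
  unfold Spre
  rw [Finset.sum_range_add]

lemma Spre_period (c : List ℤ) (hc : c.sum = 1) (j : ℕ) :
    Spre c (j + c.length) = Spre c j + 1 := by
  induction j with
  | zero =>
    rw [Nat.zero_add, Spre, Spre]
    have h1 : ∀ i ∈ Finset.range c.length, c.getD (i % c.length) 0 = c.getD i 0 := by
      intro i hi
      rw [Nat.mod_eq_of_lt (Finset.mem_range.1 hi)]
    rw [Finset.sum_congr rfl h1, ← sum_take_eq, List.take_of_length_le (le_refl _), hc]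
    simp
  | succ j ih =>
    have h1 : j + 1 + c.length = (j + c.length) + 1 := by omega
    have e1 : Spre c ((j + c.length) + 1)
        = Spre c (j + c.length) + c.getD ((j + c.length) % c.length) 0 := by
      unfold Spre; rw [Finset.sum_range_succ]
    have e2 : Spre c (j + 1) = Spre c j + c.getD (j % c.length) 0 := by
      unfold Spre; rw [Finset.sum_range_succ]
    rw [h1, e1, e2, ih, Nat.add_mod_right]
    ring

lemma getD_rotate (c : List ℤ) (t i : ℕ) (hi : i < c.length) :
    (c.rotate t).getD i 0 = c.getD ((t + i) % c.length) 0 := by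
  have hlen : (c.rotate t).length = c.length := List.length_rotate c t
  rw [List.getD_eq_getElem _ _ (by omega), List.getD_eq_getElem _ _
    (by exact Nat.mod_lt _ (by omega))]
  have := List.get_rotate c t ⟨i, by omega⟩
  simpa [Nat.add_comm] using this

lemma rot_take_sum (c : List ℤ) (t m : ℕ) (hm : m ≤ c.length) :
    ((c.rotate t).take m).sum = Spre c (t + m) - Spre c t := by
  rw [sum_take_eq, Spre_add]
  have h1 : ∀ i ∈ Finset.range m, (c.rotate t).getD i 0 = c.getD ((t + i) % c.length) 0 := by
    intro i hi
    exact getD_rotate c t i (by have := Finset.mem_range.1 hi; omega)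
  rw [Finset.sum_congr rfl h1]
  ring

def Good (c : List ℤ) (t : ℕ) : Prop :=
  ∀ m, 1 ≤ m → m ≤ c.length → 1 ≤ ((c.rotate t).take m).sum

lemma good_iff (c : List ℤ) (hc : c.sum = 1) (hlen : 1 ≤ c.length) (t : ℕ) :
    Good c t ↔ ∀ j, t < j → Spre c t < Spre c j := by
  constructor
  · intro hg j
    induction j using Nat.strong_induction_on with
    | _ j ih =>
      intro hj
      rcases le_or_gt j (t + c.length) with h | h
      · have := hg (j - t) (by omega) (by omega)
        rw [rot_take_sum c t (j-t) (by omega)] at this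
        have hjt : t + (j - t) = j := by omega
        rw [hjt] at this
        omega
      · have h2 : Spre c (j - c.length) + 1 = Spre c j := by
          rw [← Spre_period c hc (j - c.length)]
          congr 1
          omega
        have := ih (j - c.length) (by omega) (by omega)
        omega
  · intro h m hm1 hm2
    rw [rot_take_sum c t m hm2]
    have := h (t + m) (by omega)
    omega

theorem cycle_lemma (c : List ℤ) (hlen : 1 ≤ c.length) (hsum : c.sum = 1) :
    ∃! t, t < c.length ∧ Good c t := by
  classical
  set F := (Finset.range c.length).filter
    (fun t => ∀ j ∈ Finset.range c.length, Spre c t ≤ Spre c j) with hF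
  have hFne : F.Nonempty := by
    obtain ⟨t, ht, hmin⟩ := Finset.exists_min_image (Finset.range c.length) (Spre c)
      (Finset.nonempty_range_iff.2 (by omega))
    exact ⟨t, Finset.mem_filter.2 ⟨ht, hmin⟩⟩
  set t0 := F.max' hFne with ht0
  have ht0F : t0 ∈ F := Finset.max'_mem _ _
  have ht0lt : t0 < c.length := Finset.mem_range.1 (Finset.mem_filter.1 ht0F).1
  have ht0min : ∀ j < c.length, Spre c t0 ≤ Spre c j := by
    intro j hj
    exact (Finset.mem_filter.1 ht0F).2 j (Finset.mem_range.2 hj)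
  have hkey : ∀ j, t0 < j → Spre c t0 < Spre c j := by
    intro j
    induction j using Nat.strong_induction_on with
    | _ j ih =>
      intro hj
      rcases lt_or_ge j c.length with h | h
      · rcases lt_or_eq_of_le (ht0min j h) with h1 | h1
        · exact h1
        · exfalso
          have hjF : j ∈ F := by
            rw [hF]
            refine Finset.mem_filter.2 ⟨Finset.mem_range.2 h, fun i hi => ?_⟩
            rw [← h1]
            exact ht0min i (Finset.mem_range.1 hi)
          have := Finset.le_max' F j hjF
          omega
      · have h2 : Spre c (j - c.length) + 1 = Spre c j := by
          rw [← Spre_period c hsum (j - c.length)]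
          congr 1
          omega
        rcases le_or_gt (j - c.length) t0 with h3 | h3
        · have := ht0min (j - c.length) (by omega)
          omega
        · have := ih (j - c.length) (by omega) h3
          omega
  refine ⟨t0, ⟨ht0lt, (good_iff c hsum hlen t0).2 hkey⟩, ?_⟩
  rintro t' ⟨ht'lt, ht'good⟩
  by_contra hne
  have hg0 := (good_iff c hsum hlen t0).2 hkey
  rcases lt_or_gt_of_ne hne with h | h
  · -- t' < t0
    have h1 := (good_iff c hsum hlen t').1 ht'good t0 h
    have h2 := hkey (t' + c.length) (by omega)
    rw [Spre_period c hsum t'] at h2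
    omega
  · have h1 := hkey t' h
    have h2 := (good_iff c hsum hlen t').1 ht'good (t0 + c.length) (by omega)
    rw [Spre_period c hsum t0] at h2
    omega

/-! ### the marked bijection -/

def incHead : List ℕ → List ℕ
  | [] => []
  | x :: t => (x+1) :: t

def decHead : List ℕ → List ℕ
  | [] => []
  | x :: t => (x-1) :: t

@[simp] lemma incHead_length : ∀ (l : List ℕ), (incHead l).length = l.length
  | [] => rfl
  | _ :: _ => rfl

@[simp] lemma decHead_length : ∀ (l : List ℕ), (decHead l).length = l.length
  | [] => rfl
  | _ :: _ => rfl

lemma incHead_sum : ∀ (l : List ℕ), l ≠ [] → (incHead l).sum = l.sum + 1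
  | [], h => absurd rfl h
  | x :: t, _ => by simp [incHead]; omega

lemma incHead_pos : ∀ (l : List ℕ), (∀ u ∈ l, 0 < u) → ∀ u ∈ incHead l, 0 < u
  | [], _ => by simp [incHead]
  | x :: t, h => by
    intro u hu
    rcases List.mem_cons.1 hu with rfl | hu
    · omega
    · exact h u (by simp [hu])

lemma incHead_take_sum : ∀ (l : List ℕ) (m : ℕ), 1 ≤ m →
    ((incHead l).take m).sum = (l.take m).sum + (if l = [] then 0 else 1)
  | [], m, _ => by simp [incHead]
  | x :: t, m, hm => by
    obtain ⟨m', rfl⟩ : ∃ m', m = m' + 1 := ⟨m - 1, by omega⟩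
    simp [incHead, List.take_succ_cons]
    omega

def zc (k : ℕ) (x y : List ℕ) : List ℤ := List.zipWith (fun (u v : ℕ) => (u:ℤ) - k * v) x y

lemma zc_length (k : ℕ) (x y : List ℕ) (h : x.length = y.length) :
    (zc k x y).length = x.length := by simp [zc]; omega

lemma zc_sum (k : ℕ) : ∀ (x y : List ℕ), x.length = y.length →
    (zc k x y).sum = (x.sum : ℤ) - k * (y.sum : ℤ)
  | [], [], _ => by simp [zc]
  | u :: x, v :: y, h => by
    simp only [zc, List.zipWith_cons_cons, List.sum_cons, List.sum_cons] at *
    rw [show (List.zipWith (fun (u v : ℕ) => (u:ℤ) - k * v) x y) = zc k x y from rfl,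
      zc_sum k x y (by simpa using h)]
    push_cast
    ring

lemma zc_take (k : ℕ) (x y : List ℕ) (m : ℕ) :
    (zc k x y).take m = zc k (x.take m) (y.take m) := by
  simp [zc, List.take_zipWith]

lemma zc_take_sum (k : ℕ) (x y : List ℕ) (h : x.length = y.length) (m : ℕ) :
    ((zc k x y).take m).sum = ((x.take m).sum : ℤ) - k * ((y.take m).sum : ℤ) := by
  rw [zc_take, zc_sum k _ _ (by simp; omega)]

lemma zc_rotate (k : ℕ) (x y : List ℕ) (h : x.length = y.length) (t : ℕ) (ht : t ≤ x.length) :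
    (zc k x y).rotate t = zc k (x.rotate t) (y.rotate t) := by
  rw [List.rotate_eq_drop_append_take (by rw [zc_length k x y h]; omega),
    List.rotate_eq_drop_append_take ht, List.rotate_eq_drop_append_take (by omega)]
  unfold zc
  rw [List.drop_zipWith, List.take_zipWith,
    ← List.zipWith_append (by simp; omega)]

@[simp] lemma rotate_sum {α : Type*} [AddCommMonoid α] (l : List α) (t : ℕ) :
    (l.rotate t).sum = l.sum :=
  (List.rotate_perm l t).sum_eq

abbrev DData (k n p : ℕ) := {ab : List ℕ × List ℕ //
  ab.1.length = p ∧ ab.2.length = p ∧ (∀ u ∈ ab.1, 0 < u) ∧ (∀ v ∈ ab.2, 0 < v) ∧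
  ab.1.sum = k*n ∧ ab.2.sum = n ∧
  ∀ m ≤ p, (k * ((ab.2.take m).sum : ℤ)) ≤ ((ab.1.take m).sum : ℤ)}

instance ddataFinite (k n p : ℕ) : Finite (DData k n p) := by
  apply Finite.of_injective (f := fun x : DData k n p =>
    ((⟨x.1.1, x.2.1, x.2.2.2.1, x.2.2.2.2.2.1⟩ : Comp (k*n) p),
     (⟨x.1.2, x.2.2.1, x.2.2.2.2.1, x.2.2.2.2.2.2.1⟩ : Comp n p)))
  rintro ⟨⟨a, b⟩, h⟩ ⟨⟨a', b'⟩, h'⟩ heq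
  simp only [Prod.mk.injEq, Subtype.mk.injEq] at heq
  apply Subtype.ext
  simp [heq.1, heq.2]

def markedMap (k n p : ℕ) (x : DData k n p × Fin p) : Comp (k*n+1) p × Comp n p :=
  (⟨(incHead x.1.1.1).rotate x.2, by
    obtain ⟨⟨⟨a, b⟩, h⟩, m⟩ := x
    obtain ⟨h1, h2, h3, h4, h5, h6, h7⟩ := h
    have hane : a ≠ [] := by
      intro hnil
      have hm := m.2
      rw [hnil] at h1
      simp at h1
      omega
    refine ⟨by simp [h1], ?_, ?_⟩
    · intro u hu
      exact incHead_pos a h3 u (List.mem_rotate.1 hu)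
    · rw [rotate_sum, incHead_sum a hane, h5]⟩,
   ⟨x.1.1.2.rotate x.2, by
    obtain ⟨⟨⟨a, b⟩, h⟩, m⟩ := x
    obtain ⟨h1, h2, h3, h4, h5, h6, h7⟩ := h
    refine ⟨by simp [h2], ?_, by rw [rotate_sum, h6]⟩
    intro v hv
    exact h4 v (List.mem_rotate.1 hv)⟩)

lemma decHead_take_sum : ∀ (l : List ℕ), 1 ≤ l.headD 1 → ∀ m, 1 ≤ m →
    ((decHead l).take m).sum = (l.take m).sum - 1
  | [], _, m, _ => by simp [decHead]
  | x :: t, hx, m, hm => by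
    obtain ⟨m', rfl⟩ : ∃ m', m = m' + 1 := ⟨m - 1, by omega⟩
    simp only [decHead, List.take_succ_cons, List.sum_cons]
    simp at hx
    omega

lemma decHead_sum (l : List ℕ) (h : 1 ≤ l.headD 1) : (decHead l).sum = l.sum - 1 := by
  cases l with
  | nil => simp [decHead]
  | cons x t =>
    simp only [decHead, List.sum_cons]
    simp at h
    omega

lemma incHead_decHead (l : List ℕ) (h : 1 ≤ l.headD 0) : incHead (decHead l) = l := by
  cases l with
  | nil => rfl
  | cons x t =>
    simp only [decHead, incHead]
    simp at h
    congr 1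
    omega

lemma rotate_cancel {α : Type*} (l l' : List α) (t : ℕ) (hlen : l.length = l'.length)
    (ht : t ≤ l.length) (h : l.rotate t = l'.rotate t) : l = l' := by
  rw [List.rotate_eq_drop_append_take ht, List.rotate_eq_drop_append_take (by omega)] at h
  have h2 := List.append_inj h (by simp; omega)
  rw [← List.take_append_drop t l, ← List.take_append_drop t l', h2.1, h2.2]

lemma rotate_back {α : Type*} (l : List α) (t p : ℕ) (hp : l.length = p) (ht : t < p) :
    (l.rotate t).rotate ((p - t) % p) = l := by
  rw [List.rotate_rotate]
  rcases Nat.eq_zero_or_pos t with rfl | htpos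
  · rw [Nat.sub_zero, Nat.mod_self]
    exact List.rotate_zero l
  · rw [Nat.mod_eq_of_lt (by omega), show t + (p - t) = p by omega, ← hp]
    exact List.rotate_length l

lemma mod_inj_aux (p m : ℕ) (hm : m < p) : (p - m) % p = if m = 0 then 0 else p - m := by
  rcases Nat.eq_zero_or_pos m with rfl | h
  · simp [Nat.mod_self]
  · rw [if_neg (by omega), Nat.mod_eq_of_lt (by omega)]

lemma good_of_rotate_eq (C c0 : List ℤ) (t : ℕ) (hlen : C.length = c0.length)
    (h : C.rotate t = c0) (hg : Good c0 0) : Good C t := by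
  intro m hm1 hm2
  rw [h]
  have := hg m hm1 (by omega)
  rwa [List.rotate_zero] at this

lemma incHead_inj : ∀ (l l' : List ℕ), incHead l = incHead l' → l.length = l'.length → l = l'
  | [], [], _, _ => rfl
  | x :: t, x' :: t', h, _ => by
    simp only [incHead, List.cons.injEq] at h
    rw [h.2]
    congr 1
    omega
  | [], _ :: _, _, hl => by simp at hl
  | _ :: _, [], _, hl => by simp at hl

lemma ddata_c0 (k n p : ℕ) (hp : 1 ≤ p) (a b : List ℕ)
    (h1 : a.length = p) (h2 : b.length = p) (h5 : a.sum = k*n) (h6 : b.sum = n)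
    (h7 : ∀ m ≤ p, (k * ((b.take m).sum : ℤ)) ≤ ((a.take m).sum : ℤ)) :
    (zc k (incHead a) b).length = p ∧ (zc k (incHead a) b).sum = 1 ∧
      Good (zc k (incHead a) b) 0 := by
  have hane : a ≠ [] := by
    intro hnil; rw [hnil] at h1; simp at h1; omega
  have hlen : (incHead a).length = b.length := by simp [h1, h2]
  have hzl : (zc k (incHead a) b).length = p := by rw [zc_length _ _ _ hlen]; simp [h1]
  refine ⟨hzl, ?_, ?_⟩
  · rw [zc_sum _ _ _ hlen, incHead_sum a hane, h5, h6]
    push_cast; ring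
  · intro m hm1 hm2
    rw [List.rotate_zero, zc_take_sum _ _ _ hlen, incHead_take_sum a m hm1, if_neg hane]
    have := h7 m (by omega)
    rw [Nat.cast_add, Nat.cast_one]
    linarith

theorem marked_bij (k n p : ℕ) (hk : 1 ≤ k) (hp : 1 ≤ p) : Function.Bijective (markedMap k n p) := by
  constructor
  · rintro ⟨⟨⟨a, b⟩, hd⟩, m⟩ ⟨⟨⟨a', b'⟩, hd'⟩, m'⟩ heq
    obtain ⟨h1, h2, h3, h4, h5, h6, h7⟩ := hd
    obtain ⟨h1', h2', h3', h4', h5', h6', h7'⟩ := hd'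
    unfold markedMap at heq
    simp only [Prod.mk.injEq, Subtype.mk.injEq] at heq
    obtain ⟨hA, hB⟩ := heq
    obtain ⟨hzl, hzs, hzg⟩ := ddata_c0 k n p hp a b h1 h2 h5 h6 h7
    obtain ⟨hzl', hzs', hzg'⟩ := ddata_c0 k n p hp a' b' h1' h2' h5' h6' h7'
    have hlen1 : (incHead a).length = b.length := by simp [h1, h2]
    have hlen1' : (incHead a').length = b'.length := by simp [h1', h2']
    set C := zc k ((incHead a).rotate m.1) (b.rotate m.1) with hC
    have hrot : C = (zc k (incHead a) b).rotate m.1 := by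
      rw [hC, zc_rotate _ _ _ hlen1 m.1 (by simp [h1])]
    have hrot' : C = (zc k (incHead a') b').rotate m'.1 := by
      rw [hC, hA, hB, zc_rotate _ _ _ hlen1' m'.1 (by simp [h1'])]
    have hClen : C.length = p := by rw [hrot, List.length_rotate, hzl]
    have hCsum : C.sum = 1 := by rw [hrot, rotate_sum, hzs]
    have hg1 : Good C ((p - m.1) % p) := by
      apply good_of_rotate_eq _ (zc k (incHead a) b) _ (by omega)
      · rw [hrot, rotate_back _ _ _ hzl m.2]
      · exact hzg
    have hg2 : Good C ((p - m'.1) % p) := by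
      apply good_of_rotate_eq _ (zc k (incHead a') b') _ (by omega)
      · rw [hrot', rotate_back _ _ _ hzl' m'.2]
      · exact hzg'
    obtain ⟨t, _, huniq⟩ := cycle_lemma C (by omega) hCsum
    have e1 := huniq _ ⟨by rw [hClen]; exact Nat.mod_lt _ (by omega), hg1⟩
    have e2 := huniq _ ⟨by rw [hClen]; exact Nat.mod_lt _ (by omega), hg2⟩
    have hmm : m.1 = m'.1 := by
      have q1 := mod_inj_aux p m.1 m.2
      have q2 := mod_inj_aux p m'.1 m'.2
      have hmp := m.2
      have hmp' := m'.2
      rw [q1] at e1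
      rw [q2] at e2
      split_ifs at e1 e2 <;> omega
    rw [← hmm] at hA hB
    have haa : a = a' := by
      apply incHead_inj _ _ (rotate_cancel _ _ m.1 (by simp [h1, h1']) (by simp [h1]) hA)
      simp [h1, h1']
    have hbb : b = b' := rotate_cancel _ _ m.1 (by simp [h2, h2']) (by simp [h2]) hB
    exact Prod.ext (Subtype.ext (show (a,b) = (a',b') by rw [haa, hbb])) (Fin.ext hmm)
  · rintro ⟨⟨x, hx1, hx2, hx3⟩, ⟨y, hy1, hy2, hy3⟩⟩
    have hlenxy : x.length = y.length := by rw [hx1, hy1]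
    have hc0len : (zc k x y).length = p := by rw [zc_length _ _ _ hlenxy, hx1]
    have hc0sum : (zc k x y).sum = 1 := by
      rw [zc_sum _ _ _ hlenxy, hx3, hy3]
      push_cast; ring
    obtain ⟨t, ⟨htlt, htgood⟩, _⟩ := cycle_lemma (zc k x y) (by omega) hc0sum
    have htlt' : t < p := by omega
    set a'' := x.rotate t with ha''
    set b'' := y.rotate t with hb''
    have ha''len : a''.length = p := by rw [ha'', List.length_rotate, hx1]
    have hb''len : b''.length = p := by rw [hb'', List.length_rotate, hy1]
    have hzrot : (zc k x y).rotate t = zc k a'' b'' :=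
      zc_rotate _ _ _ hlenxy t (by omega)
    have hlen'' : a''.length = b''.length := by rw [ha''len, hb''len]
    -- the prefix sums of the rotated c are ≥ 1
    have hpre : ∀ m, 1 ≤ m → m ≤ p → 1 ≤ ((a''.take m).sum : ℤ) - k * ((b''.take m).sum : ℤ) := by
      intro m hm1 hm2
      have := htgood m hm1 (by omega)
      rwa [hzrot, zc_take_sum _ _ _ hlen''] at this
    have hb''pos : ∀ v ∈ b'', 0 < v := fun v hv => hy2 v (List.mem_rotate.1 hv)
    have ha''pos : ∀ u ∈ a'', 0 < u := fun u hu => hx2 u (List.mem_rotate.1 hu)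
    have ha''ne : a'' ≠ [] := by
      intro hnil; rw [hnil] at ha''len; simp at ha''len; omega
    have hb''ne : b'' ≠ [] := by
      intro hnil; rw [hnil] at hb''len; simp at hb''len; omega
    obtain ⟨w, ta, hwa⟩ := List.exists_cons_of_ne_nil ha''ne
    obtain ⟨v, tb, hvb⟩ := List.exists_cons_of_ne_nil hb''ne
    have hw2 : 2 ≤ w := by
      have h0 := hpre 1 (le_refl 1) (by omega)
      rw [hwa, hvb] at h0
      simp at h0
      have hv1 : 1 ≤ v := hb''pos v (by rw [hvb]; simp)
      have hk' : (1:ℤ) ≤ (k:ℤ) := by exact_mod_cast hk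
      have hv' : (1:ℤ) ≤ (v:ℤ) := by exact_mod_cast hv1
      have hkk : (k:ℤ) * 1 ≤ (k:ℤ) * v := mul_le_mul_of_nonneg_left hv' (by linarith)
      have h2w : (2:ℤ) ≤ (w:ℤ) := by linarith
      exact_mod_cast h2w
    have hheadD : 1 ≤ a''.headD 1 := by rw [hwa]; simp; omega
    have hheadD0 : 1 ≤ a''.headD 0 := by rw [hwa]; simp; omega
    -- build the DData element
    have hsum'' : a''.sum = k * n + 1 := by rw [ha'', rotate_sum, hx3]
    have hbsum'' : b''.sum = n := by rw [hb'', rotate_sum, hy3]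
    refine ⟨⟨⟨(decHead a'', b''), ?_, hb''len, ?_, hb''pos, ?_, hbsum'', ?_⟩,
      ⟨(p - t) % p, Nat.mod_lt _ (by omega)⟩⟩, ?_⟩
    · simp [ha''len]
    · intro u hu
      rw [hwa] at hu
      simp only [decHead, List.mem_cons] at hu
      rcases hu with rfl | hu
      · omega
      · exact ha''pos u (by rw [hwa]; simp [hu])
    · rw [decHead_sum a'' hheadD, hsum'']
      omega
    · intro m hm
      rcases Nat.eq_zero_or_pos m with rfl | hm1
      · simp
      · rw [decHead_take_sum a'' hheadD m hm1]
        have h2 := hpre m hm1 hm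
        have h3 : 1 ≤ (a''.take m).sum := by
          rw [hwa]
          obtain ⟨m', rfl⟩ : ∃ m', m = m' + 1 := ⟨m - 1, by omega⟩
          rw [List.take_succ_cons, List.sum_cons]
          omega
        push_cast [h3]
        push_cast at h2
        omega
    · unfold markedMap
      simp only [Prod.mk.injEq, Subtype.mk.injEq]
      constructor
      · rw [incHead_decHead a'' hheadD0, ha'', rotate_back x t p hx1 htlt']
      · rw [hb'', rotate_back y t p hy1 htlt']

/-! ### the path-side bijection -/

def pathMap (k n r : ℕ) (d : DData k n (r+1)) :
    {P : List DStep // IsDyck k P ∧ P.count false = n ∧ pkNR P = r} :=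
  ⟨blocksPath d.1.1 d.1.2, by
    obtain ⟨⟨a, b⟩, h1, h2, h3, h4, h5, h6, h7⟩ := d
    dsimp only at h1 h2 h3 h4 h5 h6 h7 ⊢
    have hlen : a.length = b.length := by rw [h1, h2]
    have hcard := card_peakSet_blocksPath a b hlen h3 h4
    refine ⟨⟨?_, ?_⟩, ?_, ?_⟩
    · refine (NN_blocksPath k 0 a b hlen).2 ?_
      intro m hm
      have := h7 m (by omega)
      linarith
    · rw [height_blocksPath_end k 0 a b hlen, h5, h6]
      push_cast; ring
    · rw [count_false_blocksPath a b hlen, h6]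
    · rw [pkNR_eq_card_sub_one _ (Finset.card_pos.1 (by omega)), hcard, h1]
      omega⟩

theorem pathMap_bij (k n r : ℕ) (hk : 1 ≤ k) (hn : 1 ≤ n) :
    Function.Bijective (pathMap k n r) := by
  constructor
  · rintro ⟨⟨a, b⟩, h1, h2, h3, h4, h5, h6, h7⟩ ⟨⟨a', b'⟩, h1', h2', h3', h4', h5', h6', h7'⟩ heq
    dsimp only at h1 h2 h3 h4 h1' h2' h3' h4'
    have heq2 : blocksPath a b = blocksPath a' b' := congrArg Subtype.val heq
    obtain ⟨ea, eb⟩ := blocksPath_inj a b a' b' (by rw [h1, h2]) (by rw [h1', h2'])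
      h3 h4 h3' h4' heq2
    exact Subtype.ext (show ((a,b) : List ℕ × List ℕ) = (a',b') by rw [ea, eb])
  · rintro ⟨P, hD, hc, hpk⟩
    have hPne : P ≠ [] := by
      intro hnil
      rw [hnil] at hc
      simp at hc
      omega
    have hhead : P = [] ∨ P.head? = some true := by
      right
      obtain ⟨s, Q, rfl⟩ := List.exists_cons_of_ne_nil hPne
      cases s with
      | true => rfl
      | false =>
        exfalso
        have := hD.1 1 (by simp)
        simp [height, stepVal] at this
        omega
    have hlast : P.getLast? ≠ some true := by
      intro hcon
      obtain ⟨Q, rfl⟩ := List.getLast?_eq_some_iff.1 hcon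
      have hend := hD.2
      have hprev := hD.1 Q.length (by simp)
      rw [height_append_left k 0 Q [true] (le_refl _)] at hprev
      have : (Q ++ [true]).length = Q.length + 1 := by simp
      have hstep : ∀ s, height k s [true] 1 = s + 1 := by
        intro s; simp [height, stepVal]
      rw [this, height_append_right k 0 Q [true] 1, hstep] at hend
      omega
    obtain ⟨a, b, hab, ha, hb, hbp⟩ := decompose P.length P (le_refl _) hhead hlast
    have hbsum : b.sum = n := by
      rw [← count_false_blocksPath a b hab, hbp]
      exact hc
    have hasum : a.sum = k * n := by
      have h0 := hD.2
      rw [height_eq_counts] at h0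
      have : (P.count true : ℤ) = k * n := by
        rw [← hc]
        omega
      have h1 : P.count true = k * n := by exact_mod_cast this
      rw [← count_true_blocksPath a b hab, hbp]
      exact h1
    have hane : a ≠ [] := by
      intro hnil
      apply hPne
      rw [← hbp, hnil]
      simp
    have hcard := card_peakSet_blocksPath a b hab ha hb
    rw [hbp] at hcard
    have hcardpos : 0 < a.length := by
      cases a with
      | nil => exact absurd rfl hane
      | cons _ _ => simp
    have hpk2 : pkNR P = (peakSet P).card - 1 :=
      pkNR_eq_card_sub_one P (Finset.card_pos.1 (by omega))
    have halen : a.length = r + 1 := by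
      rw [hpk2, hcard] at hpk
      omega
    have hpre : ∀ m ≤ r + 1, (k * ((b.take m).sum : ℤ)) ≤ ((a.take m).sum : ℤ) := by
      have := (NN_blocksPath k 0 a b hab).1 (by rw [hbp]; exact hD.1)
      intro m hm
      have h0 := this m (by omega)
      linarith
    exact ⟨⟨(a, b), halen, by rw [← hab]; exact halen, ha, hb, hasum, hbsum, hpre⟩,
      Subtype.ext hbp⟩

/-! ### main theorem -/

/-- For `k, n ≥ 1` and `0 ≤ r ≤ n-1`, the number of `k`-Dyck paths of
down-size `n` whose total number of peaks is `r + 1`, i.e. with `pk(P) = r` where `pk`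
counts non-rightmost peaks, is `(1/n) C(n, r+1) C(kn, r)`. -/

theorem total_peaks_count (k n : ℕ) (hk : 1 ≤ k) (hn : 1 ≤ n) (r : ℕ) (hr : r ≤ n - 1) :
    (Nat.card {P : List DStep // IsDyck k P ∧ P.count false = n ∧ pkNR P = r} : ℚ) =
      (1 / n) * (Nat.choose n (r + 1) : ℚ) * (Nat.choose (k * n) r : ℚ) := by
  have hcomp : Nat.card (Comp n (r+1)) = (n-1).choose r := by
    have hn' : n = (n-1)+1 := by omega
    rw [show (Comp n (r+1)) = (Comp ((n-1)+1) (r+1)) by rw [← hn']]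
    exact card_comp (n-1) r
  have e1 : Nat.card {P : List DStep // IsDyck k P ∧ P.count false = n ∧ pkNR P = r}
      = Nat.card (DData k n (r+1)) :=
    (Nat.card_eq_of_bijective _ (pathMap_bij k n r hk hn)).symm
  have h := Nat.card_eq_of_bijective _ (marked_bij k n (r+1) hk (by omega))
  rw [Nat.card_prod, Nat.card_prod, Nat.card_eq_fintype_card (α := Fin (r+1)),
    Fintype.card_fin, card_comp (k*n) r, hcomp] at h
  have h2 : n * (n-1).choose r = n.choose (r+1) * (r+1) := by
    have h3 := Nat.add_one_mul_choose_eq (n-1) r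
    rwa [show (n-1) + 1 = n by omega] at h3
  have key2 : Nat.card (DData k n (r+1)) * n = n.choose (r+1) * (k*n).choose r := by
    apply Nat.eq_of_mul_eq_mul_right (show 0 < r+1 by omega)
    calc Nat.card (DData k n (r+1)) * n * (r+1)
        = (Nat.card (DData k n (r+1)) * (r+1)) * n := by ring
      _ = ((k*n).choose r * (n-1).choose r) * n := by rw [h]
      _ = (k*n).choose r * (n * (n-1).choose r) := by ring
      _ = (k*n).choose r * (n.choose (r+1) * (r+1)) := by rw [h2]
      _ = n.choose (r+1) * (k*n).choose r * (r+1) := by ring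
  rw [e1]
  have hn0 : (n:ℚ) ≠ 0 := Nat.cast_ne_zero.2 (by omega)
  have hcast : (Nat.card (DData k n (r+1)) : ℚ) * n
      = (n.choose (r+1) : ℚ) * ((k*n).choose r : ℚ) := by exact_mod_cast key2
  field_simp
  linarith [hcast]
end
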